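/- arXiv:1512.04726 — 9 statements merged into one kernel-verified Lean document; each statement's English description precedes it below -/
import Mathlib

section
/- A typical compact set in K([0,1]^d) (with the Hausdorff metric) does not contain a similar copy of a given set P of three distinct points; i.e., the collection of compact sets K ⊆ [0,1]^d containing three distinct points similar to P is of first category in K([0,1]^d). -/
open Metric TopologicalSpace Set

noncomputable section

/-- The unit cube `[0,1]^d` as a subtype of `ℝ^d`. -/
def UnitCube (d : ℕ) : Type := {x : EuclideanSpace ℝ (Fin d) // ∀ i, x i ∈ Set.Icc (0 : ℝ) 1}

noncomputable instance (d : ℕ) : MetricSpace (UnitCube d) :=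
  Subtype.metricSpace

lemma UnitCube.dist_def {d : ℕ} (x y : UnitCube d) : dist x y = ‖x.1 - y.1‖ := by
  exact dist_eq_norm x.1 y.1

lemma cube_dist_le {d : ℕ} (x y : EuclideanSpace ℝ (Fin d))
    (hx : ∀ i, x i ∈ Set.Icc (0:ℝ) 1) (hy : ∀ i, y i ∈ Set.Icc (0:ℝ) 1) :
    dist x y ≤ Real.sqrt d := by
  rw [EuclideanSpace.dist_eq]
  apply Real.sqrt_le_sqrt
  have : ∀ i : Fin d, dist (x i) (y i) ^ 2 ≤ 1 := by
    intro i
    have h1 := hx i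
    have h2 := hy i
    rw [Real.dist_eq]
    rw [sq_abs]
    simp only [Set.mem_Icc] at h1 h2
    nlinarith
  calc ∑ i, dist (x i) (y i) ^ 2 ≤ ∑ _i : Fin d, (1:ℝ) := Finset.sum_le_sum fun i _ => this i
  _ = d := by simp

def badSet (d : ℕ) (u v : ℝ) (n : ℕ) : Set (NonemptyCompacts (UnitCube d)) :=
  {E | ∃ x y z : UnitCube d, x ∈ (E : Set (UnitCube d)) ∧ y ∈ (E : Set (UnitCube d)) ∧
    z ∈ (E : Set (UnitCube d)) ∧
    ((n:ℝ)+1)⁻¹ ≤ dist x y ∧ ((n:ℝ)+1)⁻¹ ≤ dist x z ∧ ((n:ℝ)+1)⁻¹ ≤ dist y z ∧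
    dist x y * v = dist x z * u}

lemma quad_finite (a b c : ℝ) (h : a ≠ 0 ∨ b ≠ 0) :
    {t : ℝ | a*t^2 + b*t + c = 0}.Finite := by
  have hp : (Polynomial.C a * Polynomial.X^2 + Polynomial.C b * Polynomial.X
      + Polynomial.C c : Polynomial ℝ) ≠ 0 := by
    intro hzero
    rcases h with h | h
    · apply h
      have := congrArg (fun p => Polynomial.coeff p 2) hzero
      simpa using this
    · apply h
      have := congrArg (fun p => Polynomial.coeff p 1) hzero
      simpa using this
  have hfin := Polynomial.finite_setOf_isRoot hp
  apply Set.Finite.subset hfin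
  intro t ht
  simp only [Set.mem_setOf_eq, Polynomial.IsRoot, Polynomial.eval_add, Polynomial.eval_mul,
    Polynomial.eval_pow, Polynomial.eval_C, Polynomial.eval_X]
  simp only [Set.mem_setOf_eq] at ht
  linarith

lemma exists_good (u v : ℝ) (hu : u ≠ 0) (hv : v ≠ 0) (m : ℕ) :
    ∃ c : Fin m → ℝ, Function.Injective c ∧
      ∀ i j k : Fin m, i ≠ j → i ≠ k → j ≠ k →
        (c i - c j)^2 * v^2 ≠ (c i - c k)^2 * u^2 := by
  induction m with
  | zero => exact ⟨Fin.elim0, fun i => i.elim0, fun i => i.elim0⟩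
  | succ m ih =>
    obtain ⟨c, hinj, hc⟩ := ih
    have hv2 : v^2 ≠ 0 := pow_ne_zero 2 hv
    have hu2 : u^2 ≠ 0 := pow_ne_zero 2 hu
    set S1 : Fin m × Fin m → Set ℝ :=
      fun p => {x | p.1 ≠ p.2 ∧ (x - c p.1)^2 * v^2 = (x - c p.2)^2 * u^2} with hS1
    set S2 : Fin m × Fin m → Set ℝ :=
      fun p => {x | (c p.1 - x)^2 * v^2 = (c p.1 - c p.2)^2 * u^2} with hS2
    set S3 : Fin m × Fin m → Set ℝ :=
      fun p => {x | (c p.1 - c p.2)^2 * v^2 = (c p.1 - x)^2 * u^2} with hS3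
    have hS1f : ∀ p, (S1 p).Finite := by
      intro p
      by_cases hne : p.1 ≠ p.2
      · have hb : v^2 - u^2 ≠ 0 ∨ (-2*c p.1)*v^2 + (2*c p.2)*u^2 ≠ 0 := by
          by_cases hvu : v^2 - u^2 = 0
          · right
            have hvu' : v^2 = u^2 := by linarith
            rw [hvu']
            intro h0
            apply hne
            apply hinj
            have h2 : (c p.2 - c p.1) * (2*u^2) = 0 := by linear_combination h0
            rcases mul_eq_zero.mp h2 with h3 | h3
            · linarith
            · exact absurd h3 (by positivity)
          · exact Or.inl hvu
        apply Set.Finite.subset (quad_finite (v^2-u^2) ((-2*c p.1)*v^2 + (2*c p.2)*u^2)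
          ((c p.1)^2*v^2 - (c p.2)^2*u^2) hb)
        rintro x ⟨-, hx⟩
        simp only [Set.mem_setOf_eq]
        linear_combination hx
      · apply Set.Finite.subset Set.finite_empty
        rintro x ⟨h, -⟩
        exact (hne h).elim
    have hS2f : ∀ p, (S2 p).Finite := by
      intro p
      apply Set.Finite.subset (quad_finite (v^2) (-2*c p.1*v^2)
        ((c p.1)^2*v^2 - (c p.1 - c p.2)^2*u^2) (Or.inl hv2))
      intro x hx
      simp only [hS2, Set.mem_setOf_eq] at hx
      simp only [Set.mem_setOf_eq]
      linear_combination hx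
    have hS3f : ∀ p, (S3 p).Finite := by
      intro p
      apply Set.Finite.subset (quad_finite (u^2) (-2*c p.1*u^2)
        ((c p.1)^2*u^2 - (c p.1 - c p.2)^2*v^2) (Or.inl hu2))
      intro x hx
      simp only [hS3, Set.mem_setOf_eq] at hx
      simp only [Set.mem_setOf_eq]
      linear_combination -hx
    have hBad : (Set.range c ∪ ⋃ p, (S1 p ∪ S2 p ∪ S3 p)).Finite :=
      (Set.finite_range c).union (Set.finite_iUnion fun p =>
        ((hS1f p).union (hS2f p)).union (hS3f p))
    obtain ⟨x, hx⟩ := hBad.infinite_compl.nonempty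
    simp only [Set.mem_compl_iff, Set.mem_union, Set.mem_iUnion, not_or, not_exists] at hx
    obtain ⟨hx1, hx2⟩ := hx
    have hxS : ∀ p, x ∉ S1 p ∧ x ∉ S2 p ∧ x ∉ S3 p := by
      intro p
      have := hx2 p
      tauto
    refine ⟨Fin.snoc c x, ?_, ?_⟩
    · intro i j h
      induction i using Fin.lastCases with
      | last =>
        induction j using Fin.lastCases with
        | last => rfl
        | cast j' =>
          rw [Fin.snoc_last, Fin.snoc_castSucc] at h
          exact absurd ⟨j', h.symm⟩ hx1
      | cast i' =>
        induction j using Fin.lastCases with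
        | last =>
          rw [Fin.snoc_last, Fin.snoc_castSucc] at h
          exact absurd ⟨i', h⟩ hx1
        | cast j' =>
          rw [Fin.snoc_castSucc, Fin.snoc_castSucc] at h
          exact congrArg Fin.castSucc (hinj h)
    · intro i j k hij hik hjk
      induction i using Fin.lastCases with
      | last =>
        induction j using Fin.lastCases with
        | last => exact absurd rfl hij
        | cast j' =>
          induction k using Fin.lastCases with
          | last => exact absurd rfl hik
          | cast k' =>
            rw [Fin.snoc_last, Fin.snoc_castSucc, Fin.snoc_castSucc]
            intro heq
            exact (hxS (j', k')).1 ⟨fun h => hjk (congrArg Fin.castSucc h), heq⟩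
      | cast i' =>
        induction j using Fin.lastCases with
        | last =>
          induction k using Fin.lastCases with
          | last => exact absurd rfl hjk
          | cast k' =>
            rw [Fin.snoc_last, Fin.snoc_castSucc, Fin.snoc_castSucc]
            intro heq
            exact (hxS (i', k')).2.1 heq
        | cast j' =>
          induction k using Fin.lastCases with
          | last =>
            rw [Fin.snoc_last, Fin.snoc_castSucc, Fin.snoc_castSucc]
            intro heq
            exact (hxS (i', j')).2.2 heq
          | cast k' =>
            rw [Fin.snoc_castSucc, Fin.snoc_castSucc, Fin.snoc_castSucc]
            exact hc i' j' k' (fun h => hij (congrArg Fin.castSucc h))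
              (fun h => hik (congrArg Fin.castSucc h))
              (fun h => hjk (congrArg Fin.castSucc h))

lemma exists_pos_lb {ι : Type*} [Fintype ι] (g : ι → ℝ) (Q : ι → Prop) [DecidablePred Q]
    (h : ∀ i, Q i → 0 < g i) : ∃ m0 : ℝ, 0 < m0 ∧ ∀ i, Q i → m0 ≤ g i := by
  classical
  set MS : Finset ℝ := insert 1 ((Finset.univ.filter Q).image g) with hMS
  have hMSne : MS.Nonempty := Finset.insert_nonempty _ _
  have hpos : ∀ r ∈ MS, 0 < r := by
    intro r hr
    rcases Finset.mem_insert.mp hr with rfl | hr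
    · norm_num
    · obtain ⟨p, hpT, rfl⟩ := Finset.mem_image.mp hr
      exact h p (Finset.mem_filter.mp hpT).2
  refine ⟨MS.min' hMSne, hpos _ (MS.min'_mem hMSne), ?_⟩
  intro i hQ
  apply Finset.min'_le
  exact Finset.mem_insert_of_mem (Finset.mem_image_of_mem _
    (Finset.mem_filter.mpr ⟨Finset.mem_univ _, hQ⟩))

lemma incube_arith (θ s a : ℝ) (hθ0 : 0 < θ) (hθ1 : θ ≤ 1/2) (ha : 0 ≤ a) (ha1 : a ≤ 1)
    (hs : |s| ≤ θ/2) : (1/2 + (1-θ)*(a-1/2)) + s ∈ Set.Icc (0:ℝ) 1 := by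
  obtain ⟨h1, h2⟩ := abs_le.mp hs
  rw [Set.mem_Icc]
  constructor <;> nlinarith [mul_nonneg (by linarith : (0:ℝ) ≤ 1-θ) ha,
    mul_nonneg (by linarith : (0:ℝ) ≤ 1-θ) (by linarith : (0:ℝ) ≤ 1 - a)]

set_option maxHeartbeats 4000000 in
lemma badSet_nowhereDense (d : ℕ) (u v : ℝ) (hu : 0 < u) (hv : 0 < v) (n : ℕ) :
    IsNowhereDense (badSet d u v n) := by
  rcases Nat.eq_zero_or_pos d with hd | hd
  · -- d = 0 : badSet is empty
    have : badSet d u v n = ∅ := by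
      ext E
      simp only [badSet, Set.mem_setOf_eq, Set.mem_empty_iff_false, iff_false]
      rintro ⟨x, y, z, -, -, -, hxy, -, -, -⟩
      have hxy0 : dist x y = 0 := by
        rw [UnitCube.dist_def]
        have : x.1 = y.1 := by
          ext i
          exact absurd i.2 (by omega)
        rw [this, sub_self, norm_zero]
      have : (0:ℝ) < ((n:ℝ)+1)⁻¹ := by positivity
      linarith [hxy.trans_eq hxy0]
    rw [this]
    exact isNowhereDense_empty
  -- main case d ≥ 1
  rw [IsNowhereDense, interior_eq_empty_iff_dense_compl]
  rw [Metric.dense_iff]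
  intro E ε hε
  -- the distinguished direction
  set i0 : Fin d := ⟨0, hd⟩ with hi0
  set e : EuclideanSpace ℝ (Fin d) := EuclideanSpace.single i0 (1:ℝ) with he
  have he1 : ‖e‖ = 1 := by rw [he, EuclideanSpace.norm_single, norm_one]
  -- finite net inside E
  set ε' : ℝ := ε/4 with hε'
  have hε'pos : 0 < ε' := by positivity
  have hcover : (E : Set (UnitCube d)) ⊆ ⋃ q ∈ (E : Set (UnitCube d)), ball q ε' := by
    intro q hq
    exact Set.mem_biUnion hq (mem_ball_self hε'pos)
  obtain ⟨s, hsE, hsfin, hscov⟩ := E.isCompact.elim_finite_subcover_image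
    (fun q _ => isOpen_ball) hcover
  have hsne : s.Nonempty := by
    obtain ⟨p, hp⟩ := E.nonempty
    obtain ⟨q, hq, -⟩ := Set.mem_iUnion₂.mp (hscov hp)
    exact ⟨q, hq⟩
  obtain ⟨m, f, hfs⟩ := hsfin.fin_embedding
  have hmne : Nonempty (Fin m) := by
    obtain ⟨q, hq⟩ := hsne
    rw [← hfs] at hq
    obtain ⟨i, -⟩ := hq
    exact ⟨i⟩ 
  -- shrink parameter
  set θ : ℝ := min (ε/4/(Real.sqrt d + 1)) (1/2) with hθ
  have hsd : (0:ℝ) < Real.sqrt d + 1 := by positivity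
  have hθpos : 0 < θ := by
    apply lt_min
    · positivity
    · norm_num
  have hθle : θ ≤ 1/2 := min_le_right _ _
  have hθd : θ * (Real.sqrt d + 1) ≤ ε/4 := by
    calc θ * (Real.sqrt d + 1) ≤ (ε/4/(Real.sqrt d + 1)) * (Real.sqrt d + 1) := by
          apply mul_le_mul_of_nonneg_right (min_le_left _ _) (le_of_lt hsd)
    _ = ε/4 := div_mul_cancel₀ _ (ne_of_gt hsd)
  -- generic constants
  obtain ⟨c, hcinj, hcgood⟩ := exists_good u v (ne_of_gt hu) (ne_of_gt hv) m
  obtain ⟨C, hC⟩ := Finite.exists_le (fun i : Fin m => |c i|)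
  have hC0 : (0:ℝ) ≤ C := le_trans (abs_nonneg _) (hC (Classical.arbitrary _))
  set τ : ℝ := (θ/2)/(C+1) with hτ
  have hτpos : 0 < τ := by positivity
  -- the shrunken net points
  set c0 : EuclideanSpace ℝ (Fin d) := WithLp.toLp 2 (fun _ => (1:ℝ)/2) with hc0
  set Φ : Fin m → EuclideanSpace ℝ (Fin d) :=
    (fun i => c0 + (1-θ) • ((f i).1 - c0)) with hΦ
  -- choose the generic parameter t
  set Pt : Fin m → ℝ → EuclideanSpace ℝ (Fin d) :=
    (fun i t => Φ i + (t * c i) • e) with hPt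
  have hPtnorm : ∀ (i j : Fin m) (t : ℝ), ‖Pt i t - Pt j t‖^2 =
      ‖Φ i - Φ j‖^2 + 2*(t*(c i - c j))*(inner ℝ (Φ i - Φ j) e : ℝ)
        + (t*(c i - c j))^2 := by
    intro i j t
    have hsplit : Pt i t - Pt j t = (Φ i - Φ j) + (t*(c i - c j)) • e := by
      simp only [hPt]
      module
    rw [hsplit, norm_add_sq_real, real_inner_smul_right, norm_smul]
    rw [he1, mul_one, Real.norm_eq_abs, sq_abs]
    ring
  set Roots : Set ℝ := ⋃ p : Fin m × Fin m × Fin m,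
    {t : ℝ | (p.1 ≠ p.2.1 ∧ p.1 ≠ p.2.2 ∧ p.2.1 ≠ p.2.2) ∧
      ‖Pt p.1 t - Pt p.2.1 t‖^2 * v^2 = ‖Pt p.1 t - Pt p.2.2 t‖^2 * u^2} with hRoots
  have hRootsFin : Roots.Finite := by
    rw [hRoots]
    apply Set.finite_iUnion
    intro p
    obtain ⟨i, j, k⟩ := p
    by_cases hdis : i ≠ j ∧ i ≠ k ∧ j ≠ k
    · have ha : (c i - c j)^2*v^2 - (c i - c k)^2*u^2 ≠ 0 :=
        sub_ne_zero.mpr (hcgood i j k hdis.1 hdis.2.1 hdis.2.2)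
      apply Set.Finite.subset (quad_finite ((c i - c j)^2*v^2 - (c i - c k)^2*u^2)
        (2*((c i - c j)*(inner ℝ (Φ i - Φ j) e : ℝ)*v^2
          - (c i - c k)*(inner ℝ (Φ i - Φ k) e : ℝ)*u^2))
        (‖Φ i - Φ j‖^2*v^2 - ‖Φ i - Φ k‖^2*u^2) (Or.inl ha))
      rintro t ⟨-, heq⟩
      rw [hPtnorm i j t, hPtnorm i k t] at heq
      simp only [Set.mem_setOf_eq]
      linear_combination heq
    · apply Set.Finite.subset Set.finite_empty
      rintro t ⟨hdis', -⟩
      exact hdis hdis'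
  obtain ⟨t, ht⟩ := ((Set.Ioo_infinite hτpos).diff hRootsFin).nonempty
  obtain ⟨htmem, htroots⟩ := ht
  obtain ⟨ht0, htτ⟩ := htmem
  -- bound on the movement
  have htc : ∀ i : Fin m, |t * c i| ≤ θ/2 := by
    intro i
    rw [abs_mul]
    calc |t| * |c i| ≤ τ * C := by
          apply mul_le_mul ?_ (hC i) (abs_nonneg _) (le_of_lt hτpos)
          rw [abs_of_pos ht0]
          exact le_of_lt htτ
    _ ≤ θ/2 := by
          rw [hτ, div_mul_eq_mul_div, div_le_iff₀ (by linarith)]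
          nlinarith
  -- the new points lie in the cube
  have hincube : ∀ i : Fin m, ∀ j : Fin d, (Pt i t) j ∈ Set.Icc (0:ℝ) 1 := by
    intro i j
    have hco : (Pt i t) j = (1/2 + (1-θ)*((f i).1 j - 1/2))
        + (t*c i)*(if j = i0 then 1 else 0) := by
      simp only [hPt, hΦ, hc0, he, PiLp.add_apply, PiLp.smul_apply, PiLp.sub_apply, PiLp.toLp_apply,
        EuclideanSpace.single_apply, smul_eq_mul]
    have hfj := Set.mem_Icc.mp ((f i).2 j)
    rw [hco]
    split_ifs with hji
    · rw [mul_one]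
      exact incube_arith θ (t*c i) _ hθpos hθle hfj.1 hfj.2 (htc i)
    · rw [mul_zero, add_zero]
      simpa using incube_arith θ 0 _ hθpos hθle hfj.1 hfj.2 (by rw [abs_zero]; positivity)
  set P : Fin m → UnitCube d := (fun i => ⟨Pt i t, hincube i⟩) with hP
  -- P i is close to f i
  have hPf : ∀ i : Fin m, dist (f i) (P i) ≤ ε/4 := by
    intro i
    rw [UnitCube.dist_def]
    have hsplit : (f i).1 - (P i).1 = θ • ((f i).1 - c0) - (t * c i) • e := by
      show (f i).1 - Pt i t = _
      simp only [hPt, hΦ]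
      module
    rw [hsplit]
    have hc0cube : ∀ j : Fin d, c0 j ∈ Set.Icc (0:ℝ) 1 := by
      intro j
      simp only [hc0, PiLp.toLp_apply]
      norm_num
    have hnc0 : ‖(f i).1 - c0‖ ≤ Real.sqrt d := by
      rw [← dist_eq_norm]
      exact cube_dist_le _ _ (f i).2 hc0cube
    calc ‖θ • ((f i).1 - c0) - (t * c i) • e‖
        ≤ ‖θ • ((f i).1 - c0)‖ + ‖(t * c i) • e‖ := norm_sub_le _ _
      _ = θ * ‖(f i).1 - c0‖ + |t * c i| := by
          rw [norm_smul, norm_smul, he1, mul_one, Real.norm_eq_abs, Real.norm_eq_abs,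
            abs_of_pos hθpos]
      _ ≤ θ * Real.sqrt d + θ/2 := by
          apply add_le_add (mul_le_mul_of_nonneg_left hnc0 (le_of_lt hθpos)) (htc i)
      _ ≤ θ * (Real.sqrt d + 1) := by nlinarith [hθpos]
      _ ≤ ε/4 := hθd
  -- the candidate set F
  set F : NonemptyCompacts (UnitCube d) :=
    ⟨⟨Set.range P, (Set.finite_range P).isCompact⟩, Set.range_nonempty P⟩ with hF
  have hFE : dist F E < ε := by
    rw [NonemptyCompacts.dist_eq]
    have hle : Metric.hausdorffDist (F : Set (UnitCube d)) (E : Set (UnitCube d))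
        ≤ ε' + ε/4 := by
      apply Metric.hausdorffDist_le_of_mem_dist (by positivity)
      · rintro p ⟨i, rfl⟩
        refine ⟨f i, hsE (hfs ▸ Set.mem_range_self i), ?_⟩
        rw [dist_comm]
        linarith [hPf i]
      · intro x hx
        obtain ⟨q, hq, hxq⟩ := Set.mem_iUnion₂.mp (hscov hx)
        rw [← hfs] at hq
        obtain ⟨i, rfl⟩ := hq
        refine ⟨P i, ⟨i, rfl⟩, ?_⟩
        calc dist x (P i) ≤ dist x (f i) + dist (f i) (P i) := dist_triangle _ _ _
          _ ≤ ε' + ε/4 := add_le_add (le_of_lt (mem_ball.mp hxq)) (hPf i)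
    have : ε' + ε/4 < ε := by
      rw [hε']
      linarith
    linarith
  -- margin
  have hmargin : ∃ m0 : ℝ, 0 < m0 ∧ ∀ i j k : Fin m, i ≠ j → i ≠ k → j ≠ k →
      m0 ≤ |dist (P i) (P j) * v - dist (P i) (P k) * u| := by
    classical
    have hposU : ∀ p : Fin m × Fin m × Fin m, (p.1 ≠ p.2.1 ∧ p.1 ≠ p.2.2 ∧ p.2.1 ≠ p.2.2) →
        0 < |dist (P p.1) (P p.2.1) * v - dist (P p.1) (P p.2.2) * u| := by
      intro p hdis
      rw [abs_pos, sub_ne_zero]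
      intro heq
      apply htroots
      rw [hRoots, Set.mem_iUnion]
      refine ⟨p, hdis, ?_⟩
      have hd1 : dist (P p.1) (P p.2.1) = ‖Pt p.1 t - Pt p.2.1 t‖ := UnitCube.dist_def _ _
      have hd2 : dist (P p.1) (P p.2.2) = ‖Pt p.1 t - Pt p.2.2 t‖ := UnitCube.dist_def _ _
      rw [hd1, hd2] at heq
      linear_combination (‖Pt p.1 t - Pt p.2.1 t‖*v + ‖Pt p.1 t - Pt p.2.2 t‖*u) * heq
    obtain ⟨m0, hm0pos, hm0'⟩ := exists_pos_lb
      (fun p : Fin m × Fin m × Fin m => |dist (P p.1) (P p.2.1) * v - dist (P p.1) (P p.2.2) * u|)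
      (fun p => p.1 ≠ p.2.1 ∧ p.1 ≠ p.2.2 ∧ p.2.1 ≠ p.2.2) hposU
    exact ⟨m0, hm0pos, fun i j k hij hik hjk => hm0' (i,j,k) ⟨hij, hik, hjk⟩⟩
  obtain ⟨m0, hm0pos, hm0⟩ := hmargin
  set δ : ℝ := min (((n:ℝ)+1)⁻¹/3) (m0/(4*(u+v))) with hδ
  have hδpos : 0 < δ := by
    apply lt_min
    · positivity
    · positivity
  refine ⟨F, mem_ball.mpr hFE, ?_⟩
  -- F is not in the closure of the bad set
  intro hFcl
  rw [Metric.mem_closure_iff] at hFcl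
  obtain ⟨G, hG, hFG⟩ := hFcl δ hδpos
  obtain ⟨x, y, z, hxG, hyG, hzG, hxy, hxz, hyz, hrel⟩ := hG
  have hHfin : EMetric.hausdorffEdist (F : Set (UnitCube d)) (G : Set (UnitCube d)) ≠ ⊤ :=
    Metric.hausdorffEdist_ne_top_of_nonempty_of_bounded F.nonempty G.nonempty
      F.isCompact.isBounded G.isCompact.isBounded
  have hFGd : Metric.hausdorffDist (F : Set (UnitCube d)) (G : Set (UnitCube d)) < δ := hFG
  obtain ⟨px, hpx, hpxd⟩ := Metric.exists_dist_lt_of_hausdorffDist_lt' hxG hFGd hHfin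
  obtain ⟨py, hpy, hpyd⟩ := Metric.exists_dist_lt_of_hausdorffDist_lt' hyG hFGd hHfin
  obtain ⟨pz, hpz, hpzd⟩ := Metric.exists_dist_lt_of_hausdorffDist_lt' hzG hFGd hHfin
  obtain ⟨i, rfl⟩ := hpx
  obtain ⟨j, rfl⟩ := hpy
  obtain ⟨k, rfl⟩ := hpz
  have hδ3 : 3*δ ≤ ((n:ℝ)+1)⁻¹ := by
    have := min_le_left (((n:ℝ)+1)⁻¹/3) (m0/(4*(u+v)))
    rw [← hδ] at this
    linarith
  have hij : i ≠ j := by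
    rintro rfl
    have : dist x y ≤ dist x (P i) + dist (P i) y := dist_triangle _ _ _
    rw [dist_comm x (P i)] at this
    linarith [hxy, hpxd, hpyd]
  have hik : i ≠ k := by
    rintro rfl
    have : dist x z ≤ dist x (P i) + dist (P i) z := dist_triangle _ _ _
    rw [dist_comm x (P i)] at this
    linarith [hxz, hpxd, hpzd]
  have hjk : j ≠ k := by
    rintro rfl
    have : dist y z ≤ dist y (P j) + dist (P j) z := dist_triangle _ _ _
    rw [dist_comm y (P j)] at this
    linarith [hyz, hpyd, hpzd]
  have key := hm0 i j k hij hik hjk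
  have h1 : |dist (P i) (P j) - dist x y| ≤ 2*δ := by
    rw [abs_sub_le_iff]
    constructor
    · have := dist_triangle4 (P i) x y (P j)
      rw [dist_comm y (P j)] at this
      linarith
    · have := dist_triangle4 x (P i) (P j) y
      rw [dist_comm x (P i)] at this
      linarith
  have h2 : |dist (P i) (P k) - dist x z| ≤ 2*δ := by
    rw [abs_sub_le_iff]
    constructor
    · have := dist_triangle4 (P i) x z (P k)
      rw [dist_comm z (P k)] at this
      linarith
    · have := dist_triangle4 x (P i) (P k) z
      rw [dist_comm x (P i)] at this
      linarith
  have hδm : 4*δ*(u+v) ≤ m0 := by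
    have h := min_le_right (((n:ℝ)+1)⁻¹/3) (m0/(4*(u+v)))
    rw [← hδ, le_div_iff₀ (by positivity)] at h
    linarith
  have hfinal : |dist (P i) (P j) * v - dist (P i) (P k) * u| < m0 := by
    have hb : |dist (P i) (P j) * v - dist (P i) (P k) * u| ≤
        |dist (P i) (P j) - dist x y| * v + |dist (P i) (P k) - dist x z| * u := by
      have : dist (P i) (P j) * v - dist (P i) (P k) * u =
          (dist (P i) (P j) - dist x y) * v - (dist (P i) (P k) - dist x z) * u := by
        linear_combination hrel
      rw [this]
      calc |(dist (P i) (P j) - dist x y) * v - (dist (P i) (P k) - dist x z) * u|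
          ≤ |(dist (P i) (P j) - dist x y) * v| + |(dist (P i) (P k) - dist x z) * u| :=
            abs_sub _ _
        _ = |dist (P i) (P j) - dist x y| * v + |dist (P i) (P k) - dist x z| * u := by
            rw [abs_mul, abs_mul, abs_of_pos hu, abs_of_pos hv]
      
    calc |dist (P i) (P j) * v - dist (P i) (P k) * u| ≤
        |dist (P i) (P j) - dist x y| * v + |dist (P i) (P k) - dist x z| * u := hb
    _ ≤ 2*δ*v + 2*δ*u := by
        apply add_le_add
        · exact mul_le_mul_of_nonneg_right h1 (le_of_lt hv)
        · exact mul_le_mul_of_nonneg_right h2 (le_of_lt hu)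
    _ < m0 := by
        have e1 : 0 < δ*u := mul_pos hδpos hu
        have e2 : 0 < δ*v := mul_pos hδpos hv
        linarith [hδm]
  linarith [le_trans key (le_of_lt hfinal)]

theorem stmt6 (d : ℕ) (p₁ p₂ p₃ : EuclideanSpace ℝ (Fin d))
    (h12 : p₁ ≠ p₂) (h13 : p₁ ≠ p₃) (h23 : p₂ ≠ p₃) :
    IsMeagre {E : TopologicalSpace.NonemptyCompacts (UnitCube d) |
      ∃ x y z : UnitCube d, x ∈ E ∧ y ∈ E ∧ z ∈ E ∧ x ≠ y ∧ x ≠ z ∧ y ≠ z ∧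
        ∃ r : ℝ, 0 < r ∧
          ∃ φ : EuclideanSpace ℝ (Fin d) ≃ᵢ EuclideanSpace ℝ (Fin d),
            φ '' ((fun w => r • w) '' ({p₁, p₂, p₃} : Set (EuclideanSpace ℝ (Fin d)))) =
              {x.1, y.1, z.1}} := by
  classical
  set pp : Fin 3 → EuclideanSpace ℝ (Fin d) := ![p₁, p₂, p₃] with hpp
  set U : (Fin 3 × Fin 3 × Fin 3) × ℕ → Set (NonemptyCompacts (UnitCube d)) :=
    fun q => if 0 < dist (pp q.1.1) (pp q.1.2.1) ∧ 0 < dist (pp q.1.1) (pp q.1.2.2) then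
      badSet d (dist (pp q.1.1) (pp q.1.2.1)) (dist (pp q.1.1) (pp q.1.2.2)) q.2 else ∅
    with hU
  rw [isMeagre_iff_countable_union_isNowhereDense]
  refine ⟨Set.range U, ?_, Set.countable_range _, ?_⟩
  · rintro _ ⟨q, rfl⟩
    rw [hU]
    dsimp only
    split_ifs with h
    · exact badSet_nowhereDense d _ _ h.1 h.2 q.2
    · exact isNowhereDense_empty
  · rintro E ⟨x, y, z, hxE, hyE, hzE, hxy, hxz, hyz, r, hr, φ, hφ⟩
    have himg : φ '' ((fun w => r • w) '' ({p₁, p₂, p₃} : Set (EuclideanSpace ℝ (Fin d)))) =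
        {φ (r • p₁), φ (r • p₂), φ (r • p₃)} := by
      simp only [Set.image_insert_eq, Set.image_singleton]
    rw [himg] at hφ
    have hmem : ∀ w : EuclideanSpace ℝ (Fin d), w ∈ ({x.1, y.1, z.1} :
        Set (EuclideanSpace ℝ (Fin d))) → ∃ a : Fin 3, w = φ (r • pp a) := by
      intro w hw
      rw [← hφ] at hw
      rcases hw with hw | hw | hw
      · exact ⟨0, by simpa [hpp] using hw⟩
      · exact ⟨1, by simpa [hpp] using hw⟩
      · exact ⟨2, by simpa [hpp] using hw⟩
    obtain ⟨a, ha⟩ := hmem x.1 (Set.mem_insert _ _)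
    obtain ⟨b, hb⟩ := hmem y.1 (Set.mem_insert_of_mem _ (Set.mem_insert _ _))
    obtain ⟨c, hc⟩ := hmem z.1 (Set.mem_insert_of_mem _ (Set.mem_insert_of_mem _ rfl))
    have hdist : ∀ (w w' : UnitCube d) (aa bb : Fin 3), w.1 = φ (r • pp aa) →
        w'.1 = φ (r • pp bb) → dist w w' = r * dist (pp aa) (pp bb) := by
      intro w w' aa bb hw hw'
      show dist w.1 w'.1 = _
      rw [hw, hw', IsometryEquiv.dist_eq, dist_smul₀, Real.norm_eq_abs,
        abs_of_pos hr]
    have dxy : dist x y = r * dist (pp a) (pp b) := hdist x y a b ha hb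
    have dxz : dist x z = r * dist (pp a) (pp c) := hdist x z a c ha hc
    have dyz : dist y z = r * dist (pp b) (pp c) := hdist y z b c hb hc
    have hxy1 : x.1 ≠ y.1 := fun h => hxy (Subtype.ext h)
    have hxz1 : x.1 ≠ z.1 := fun h => hxz (Subtype.ext h)
    have hyz1 : y.1 ≠ z.1 := fun h => hyz (Subtype.ext h)
    have hdxy : 0 < dist x y := dist_pos.mpr hxy
    have hdxz : 0 < dist x z := dist_pos.mpr hxz
    have hdyz : 0 < dist y z := dist_pos.mpr hyz
    have hab : 0 < dist (pp a) (pp b) := by nlinarith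
    have hac : 0 < dist (pp a) (pp c) := by nlinarith
    -- choose n
    have hδ0 : 0 < min (dist x y) (min (dist x z) (dist y z)) := by
      simp only [lt_min_iff]
      exact ⟨hdxy, hdxz, hdyz⟩
    obtain ⟨n, hn⟩ := exists_nat_one_div_lt hδ0
    have hn' : ((n:ℝ)+1)⁻¹ ≤ min (dist x y) (min (dist x z) (dist y z)) := by
      rw [← one_div]
      exact le_of_lt hn
    simp only [le_min_iff] at hn'
    rw [Set.mem_sUnion]
    refine ⟨U ((a, b, c), n), ⟨((a, b, c), n), rfl⟩, ?_⟩
    rw [hU]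
    dsimp only
    rw [if_pos ⟨hab, hac⟩]
    refine ⟨x, y, z, hxE, hyE, hzE, hn'.1, hn'.2.1, hn'.2.2, ?_⟩
    rw [dxy, dxz]
    ring
end
end

section
/- A set A ⊆ [0,1]^d is nowhere dense in [0,1]^d if and only if K_A = {E ∈ K([0,1]^d) : E ∩ A ≠ ∅} is nowhere dense in K([0,1]^d) with the Hausdorff metric. -/
open Metric Set TopologicalSpace

section Aux

variable {α : Type*} [MetricSpace α]

/-- `edist` on nonempty compacts is the Hausdorff edistance. -/
lemma nc_edist_ne_top (E F : NonemptyCompacts α) :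
    EMetric.hausdorffEdist (E : Set α) (F : Set α) ≠ ⊤ :=
  edist_ne_top E F

lemma nc_dist_eq (E F : NonemptyCompacts α) :
    dist E F = Metric.hausdorffDist (E : Set α) (F : Set α) :=
  NonemptyCompacts.dist_eq

/-- Closure of the "hitting set" of `A` equals the hitting set of `closure A`. -/
lemma closure_hitting (A : Set α) :
    closure {E : NonemptyCompacts α | ((E : Set α) ∩ A).Nonempty}
      = {E : NonemptyCompacts α | ((E : Set α) ∩ closure A).Nonempty} := by
  apply Subset.antisymm
  · intro E hE
    -- extract an approximating sequence
    have h : ∀ n : ℕ, ∃ F : NonemptyCompacts α,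
        ((F : Set α) ∩ A).Nonempty ∧ dist E F < 1 / (n + 1) := by
      intro n
      have := Metric.mem_closure_iff.1 hE (1 / (n + 1)) (by positivity)
      obtain ⟨F, hF, hd⟩ := this
      exact ⟨F, hF, hd⟩
    choose F hF hFd using h
    choose x hxF hxA using hF
    -- points close to x n inside E
    have hy : ∀ n : ℕ, ∃ y ∈ (E : Set α), dist (x n) y < 1 / (n + 1) := by
      intro n
      obtain ⟨y, hyE, hyd⟩ := E.isCompact.exists_infDist_eq_dist E.nonempty (x n)
      refine ⟨y, hyE, ?_⟩
      rw [← hyd]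
      calc infDist (x n) (E : Set α)
          ≤ hausdorffDist (F n : Set α) (E : Set α) :=
            infDist_le_hausdorffDist_of_mem (hxF n) (nc_edist_ne_top (F n) E)
        _ = dist E (F n) := by rw [nc_dist_eq, hausdorffDist_comm]
        _ < 1 / (n + 1) := hFd n
    choose y hyE hyd using hy
    obtain ⟨a, haE, φ, hφ, hlim⟩ := E.isCompact.tendsto_subseq hyE
    have hxlim : Filter.Tendsto (fun n => x (φ n)) Filter.atTop (nhds a) := by
      rw [tendsto_iff_dist_tendsto_zero]
      apply squeeze_zero (fun n => dist_nonneg)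
        (g := fun n => 1 / (φ n + 1) + dist (y (φ n)) a)
      · intro n
        calc dist (x (φ n)) a ≤ dist (x (φ n)) (y (φ n)) + dist (y (φ n)) a :=
              dist_triangle _ _ _
          _ ≤ 1 / (φ n + 1) + dist (y (φ n)) a :=
              add_le_add (le_of_lt (hyd (φ n))) le_rfl
      · have h1 : Filter.Tendsto (fun n : ℕ => 1 / ((φ n : ℝ) + 1)) Filter.atTop (nhds 0) := by
          apply (tendsto_one_div_add_atTop_nhds_zero_nat).comp
          exact hφ.tendsto_atTop
        have h2 : Filter.Tendsto (fun n => dist (y (φ n)) a) Filter.atTop (nhds 0) :=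
          (tendsto_iff_dist_tendsto_zero).1 hlim
        simpa using h1.add h2
    refine ⟨a, haE, ?_⟩
    exact mem_closure_of_tendsto hxlim (Filter.Eventually.of_forall fun n => hxA (φ n))
  · rintro E ⟨p, hpE, hpA⟩
    obtain ⟨a, haA, halim⟩ := mem_closure_iff_seq_limit.1 hpA
    -- the sets E ∪ {a n}
    set G : ℕ → NonemptyCompacts α := fun n =>
      ⟨⟨(E : Set α) ∪ {a n}, E.isCompact.union isCompact_singleton⟩,
        E.nonempty.mono subset_union_left⟩ with hG
    have hGmem : ∀ n, ((G n : Set α) ∩ A).Nonempty := fun n =>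
      ⟨a n, Or.inr rfl, haA n⟩
    have hGd : ∀ n, dist (G n) E ≤ dist (a n) p := by
      intro n
      rw [nc_dist_eq]
      apply hausdorffDist_le_of_mem_dist dist_nonneg
      · rintro z (hz | hz)
        · exact ⟨z, hz, by simpa using dist_nonneg⟩
        · exact ⟨p, hpE, by simp_all⟩
      · intro z hz
        exact ⟨z, Or.inl hz, by simpa using dist_nonneg⟩
    have : Filter.Tendsto G Filter.atTop (nhds E) := by
      rw [tendsto_iff_dist_tendsto_zero]
      apply squeeze_zero (fun n => dist_nonneg) hGd
      exact (tendsto_iff_dist_tendsto_zero).1 halim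
    exact mem_closure_of_tendsto this (Filter.Eventually.of_forall hGmem)

/-- If `B` has empty interior, so does its hitting set. -/
lemma interior_hitting_empty {B : Set α} (hB : interior B = ∅) :
    interior {E : NonemptyCompacts α | ((E : Set α) ∩ B).Nonempty} = ∅ := by
  rw [interior_eq_empty_iff_dense_compl]
  intro E
  rw [Metric.mem_closure_iff]
  intro ε hε
  -- finite ε/3 net of E
  obtain ⟨t, hts, htf, htc⟩ := E.isCompact.finite_cover_balls (show (0:ℝ) < ε/3 by linarith)
  -- pick a point outside B in each ball
  have hpick : ∀ c ∈ t, ∃ q, q ∈ ball c (ε/3) ∧ q ∉ B := by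
    intro c hc
    by_contra h
    push_neg at h
    have : ball c (ε/3) ⊆ interior B :=
      interior_maximal (fun q hq => h q hq) isOpen_ball
    rw [hB] at this
    exact absurd (this (mem_ball_self (by linarith))) (notMem_empty c)
  choose! q hq hqB using hpick
  have htne : t.Nonempty := by
    obtain ⟨z, hz⟩ := E.nonempty
    obtain ⟨c, hc, -⟩ := mem_iUnion₂.1 (htc hz)
    exact ⟨c, hc⟩
  set F : NonemptyCompacts α :=
    ⟨⟨q '' t, (htf.image q).isCompact⟩, htne.image q⟩ with hF
  refine ⟨F, ?_, ?_⟩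
  · rintro ⟨z, hz1, hz2⟩
    obtain ⟨c, hc, rfl⟩ := hz1
    exact hqB c hc hz2
  · rw [nc_dist_eq]
    have : hausdorffDist (E : Set α) (F : Set α) ≤ 2 * (ε/3) := by
      apply hausdorffDist_le_of_mem_dist (by linarith)
      · intro z hz
        obtain ⟨c, hc, hzc⟩ := mem_iUnion₂.1 (htc hz)
        refine ⟨q c, mem_image_of_mem q hc, ?_⟩
        calc dist z (q c) ≤ dist z c + dist c (q c) := dist_triangle _ _ _
          _ ≤ ε/3 + ε/3 := add_le_add (le_of_lt hzc)
              (le_of_lt (mem_ball'.1 (hq c hc)))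
          _ = 2 * (ε/3) := by ring
      · rintro z ⟨c, hc, rfl⟩
        refine ⟨c, hts hc, ?_⟩
        calc dist (q c) c ≤ ε/3 := le_of_lt (mem_ball.1 (hq c hc))
          _ ≤ 2 * (ε/3) := by linarith
    linarith
/-- If the hitting set of `B` has empty interior and `B` is closed-ish, `B` has empty interior. -/
lemma interior_empty_of_hitting {B : Set α}
    (h : interior {E : NonemptyCompacts α | ((E : Set α) ∩ B).Nonempty} = ∅) :
    interior B = ∅ := by
  by_contra hne
  obtain ⟨x, hx⟩ := Set.nonempty_iff_ne_empty.2 hne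
  obtain ⟨ε, hε, hball⟩ := Metric.isOpen_iff.1 isOpen_interior x hx
  set E₀ : NonemptyCompacts α := ⟨⟨{x}, isCompact_singleton⟩, singleton_nonempty x⟩
  have : E₀ ∈ interior {E : NonemptyCompacts α | ((E : Set α) ∩ B).Nonempty} := by
    rw [mem_interior]
    refine ⟨ball E₀ ε, ?_, isOpen_ball, mem_ball_self hε⟩
    intro F hFb
    obtain ⟨y, hyF⟩ := F.nonempty
    refine ⟨y, hyF, ?_⟩
    have h1 : dist y x ≤ hausdorffDist (F : Set α) (E₀ : Set α) := by
      have := infDist_le_hausdorffDist_of_mem hyF (nc_edist_ne_top F E₀)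
      simpa [E₀, infDist_singleton] using this
    have h2 : hausdorffDist (F : Set α) (E₀ : Set α) < ε := by
      rw [← nc_dist_eq]
      exact mem_ball.1 hFb
    exact interior_subset (hball (mem_ball.2 (lt_of_le_of_lt h1 h2)))
  rw [h] at this
  exact absurd this (notMem_empty E₀)

end Aux

theorem stmt9 (d : ℕ) (A : Set (UnitCube d)) :
    IsNowhereDense A ↔
      IsNowhereDense {E : TopologicalSpace.NonemptyCompacts (UnitCube d) |
        ((E : Set (UnitCube d)) ∩ A).Nonempty} := by
  unfold IsNowhereDense
  rw [closure_hitting]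
  constructor
  · exact interior_hitting_empty
  · exact interior_empty_of_hitting
end

section
/- If A ⊆ [0,1]^d is of first category in [0,1]^d, then K_A = {E ∈ K([0,1]^d) : E ∩ A ≠ ∅} is of first category in K([0,1]^d); consequently a typical compact set in K([0,1]^d) is disjoint from A. -/
open Metric Set TopologicalSpace

/-- For a closed set `F` with empty interior, the set of nonempty compacts meeting `F`
is nowhere dense in the hyperspace. -/
lemma aux_nowhereDense {X : Type*} [MetricSpace X] {F : Set X} (hFc : IsClosed F)
    (hFi : interior F = ∅) :
    IsNowhereDense {E : NonemptyCompacts X | ((E : Set X) ∩ F).Nonempty} := by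
  set S : Set (NonemptyCompacts X) := {E : NonemptyCompacts X | ((E : Set X) ∩ F).Nonempty}
  have hclosed : IsClosed S := by
    rw [← isOpen_compl_iff, Metric.isOpen_iff]
    intro E hE
    have hsub : (E : Set X) ⊆ Fᶜ := by
      intro x hx
      by_contra hxF
      exact hE ⟨x, hx, not_not.mp hxF⟩
    obtain ⟨r, hr, hthick⟩ := E.isCompact.exists_thickening_subset_open hFc.isOpen_compl hsub
    refine ⟨r, hr, fun E' hE' hE'S => ?_⟩
    obtain ⟨x, hxE', hxF⟩ := hE'S
    have hfin : EMetric.hausdorffEdist (E' : Set X) (E : Set X) ≠ ⊤ :=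
      Metric.hausdorffEdist_ne_top_of_nonempty_of_bounded E'.nonempty E.nonempty
        E'.isCompact.isBounded E.isCompact.isBounded
    have h1 : infDist x (E : Set X) ≤ hausdorffDist (E' : Set X) (E : Set X) :=
      Metric.infDist_le_hausdorffDist_of_mem hxE' hfin
    have h2 : hausdorffDist (E' : Set X) (E : Set X) < r := by
      rw [← NonemptyCompacts.dist_eq]
      rwa [mem_ball] at hE'
    have : x ∈ thickening r (E : Set X) :=
      (Metric.mem_thickening_iff_infDist_lt E.nonempty).mpr (lt_of_le_of_lt h1 h2)
    exact hthick this hxF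
  rw [hclosed.isNowhereDense_iff, eq_empty_iff_forall_notMem]
  intro E hE
  obtain ⟨ε, hε, hball⟩ := Metric.isOpen_iff.mp isOpen_interior E hE
  -- get a finite (ε/3)-net of E inside E
  obtain ⟨t, hts, htfin, htcov⟩ :=
    finite_approx_of_totallyBounded E.isCompact.totallyBounded (ε / 3) (by linarith)
  have hdense : Dense Fᶜ := interior_eq_empty_iff_dense_compl.mp hFi
  -- for each x, choose a point in ball x (ε/3) not in F
  have hchoice : ∀ x : X, ∃ y, y ∈ Fᶜ ∩ ball x (ε / 3) := fun x =>
    hdense.exists_mem_open isOpen_ball ⟨x, mem_ball_self (by linarith)⟩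
  choose g hg using hchoice
  set E' : Set X := g '' t with hE'def
  have hE'ne : E'.Nonempty := by
    obtain ⟨x, hx⟩ := E.nonempty
    obtain ⟨y, hy, -⟩ := mem_iUnion₂.mp (htcov hx)
    exact ⟨g y, mem_image_of_mem g hy⟩
  have hE'cpt : IsCompact E' := (htfin.image g).isCompact
  set E'' : NonemptyCompacts X := ⟨⟨E', hE'cpt⟩, hE'ne⟩ with hE''def
  have hgd : ∀ x : X, dist x (g x) ≤ ε / 3 := fun x => by
    have h1 := (hg x).2
    rw [mem_ball, dist_comm] at h1
    exact h1.le
  have hdist : hausdorffDist (E : Set X) E' ≤ 2 * ε / 3 := by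
    refine hausdorffDist_le_of_mem_dist (by linarith) ?_ ?_
    · intro x hx
      obtain ⟨y, hy, hxy⟩ := mem_iUnion₂.mp (htcov hx)
      rw [mem_ball] at hxy
      exact ⟨g y, mem_image_of_mem g hy,
        (dist_triangle x y (g y)).trans (by linarith [hgd y])⟩
    · rintro y ⟨x, hx, rfl⟩
      have h23 : ε / 3 ≤ 2 * ε / 3 := by linarith
      exact ⟨x, hts hx, (dist_comm (g x) x ▸ (hgd x)).trans h23⟩
  have hmem : E'' ∈ ball E ε := by
    rw [mem_ball, dist_comm, NonemptyCompacts.dist_eq]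
    calc hausdorffDist (E : Set X) (E'' : Set X) ≤ 2 * ε / 3 := hdist
      _ < ε := by linarith
  have : E'' ∈ S := interior_subset (hball hmem)
  obtain ⟨y, hyE', hyF⟩ := this
  obtain ⟨x, -, rfl⟩ := hyE'
  exact (hg x).1 hyF

theorem stmt10 (d : ℕ) (A : Set (UnitCube d)) (hA : IsMeagre A) :
    IsMeagre {E : TopologicalSpace.NonemptyCompacts (UnitCube d) |
      ((E : Set (UnitCube d)) ∩ A).Nonempty} := by
  obtain ⟨S, hSnd, hScount, hSsub⟩ := isMeagre_iff_countable_union_isNowhereDense.mp hA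
  have key : ∀ t ∈ S, IsMeagre {E : TopologicalSpace.NonemptyCompacts (UnitCube d) |
      ((E : Set (UnitCube d)) ∩ t).Nonempty} := by
    intro t ht
    have h1 : IsNowhereDense {E : TopologicalSpace.NonemptyCompacts (UnitCube d) |
        ((E : Set (UnitCube d)) ∩ closure t).Nonempty} :=
      aux_nowhereDense isClosed_closure (by
        have := (hSnd t ht).closure
        rwa [IsNowhereDense, closure_closure] at this)
    have h1m : IsMeagre {E : TopologicalSpace.NonemptyCompacts (UnitCube d) |
        ((E : Set (UnitCube d)) ∩ closure t).Nonempty} :=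
      isMeagre_iff_countable_union_isNowhereDense.mpr
        ⟨{_}, by simpa using h1, Set.countable_singleton _, by simp⟩
    refine h1m.mono ?_
    rintro E ⟨x, hx, hxt⟩
    exact ⟨x, hx, subset_closure hxt⟩
  have hunion : IsMeagre (⋃ t ∈ S, {E : TopologicalSpace.NonemptyCompacts (UnitCube d) |
      ((E : Set (UnitCube d)) ∩ t).Nonempty}) := by
    rw [IsMeagre, compl_iUnion₂]
    exact (countable_bInter_mem hScount).mpr fun t ht => key t ht
  refine hunion.mono ?_
  rintro E ⟨x, hxE, hxA⟩
  obtain ⟨t, htS, hxt⟩ := hSsub hxA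
  exact mem_iUnion₂.mpr ⟨t, htS, ⟨x, hxE, hxt⟩⟩
end

section
/- Let A ⊆ [0,1] be a compact set such that for every k ∈ ℕ there exist n ≥ k and a finite set γ ⊆ {j/2^n : 0 ≤ j ≤ 2^n} with Hausdorff distance d_H(A, γ) < 2^{−n²}. Then for every m ∈ ℕ, the Cartesian power A^m ⊆ ℝ^m has Hausdorff dimension zero. -/
open MeasureTheory

theorem stmt12 (A : Set ℝ) (hc : IsCompact A) (hsub : A ⊆ Set.Icc 0 1) (hne : A.Nonempty)
    (happrox : ∀ k : ℕ, ∃ n : ℕ, k ≤ n ∧ ∃ γ : Finset ℝ, γ.Nonempty ∧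
      (↑γ : Set ℝ) ⊆ {x : ℝ | ∃ j : ℕ, j ≤ 2 ^ n ∧ x = (j : ℝ) / 2 ^ n} ∧
      Metric.hausdorffDist A ↑γ < ((2 : ℝ) ^ (n ^ 2))⁻¹) :
    ∀ m : ℕ, dimH (Set.univ.pi fun _ : Fin m => A) = 0 := by
  intro m
  choose n hn γ hγne hγsub hγd using happrox
  set ε : ℕ → ℝ := fun k => ((2 : ℝ) ^ (n k ^ 2))⁻¹ with hε
  have hεpos : ∀ k, 0 < ε k := fun k => by positivity
  -- the covering
  set S : Set (Fin m → ℝ) := Set.univ.pi fun _ : Fin m => A with hS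
  set t : ∀ k : ℕ, (Fin m → {x // x ∈ γ k}) → Set (Fin m → ℝ) :=
    fun k f => Metric.closedBall (fun i => (f i : ℝ)) (ε k) with ht
  have hcov : ∀ k, S ⊆ ⋃ f, t k f := by
    intro k x hx
    have hfin : EMetric.hausdorffEdist A (γ k : Set ℝ) ≠ ⊤ :=
      Metric.hausdorffEdist_ne_top_of_nonempty_of_bounded hne ((hγne k).to_set)
        hc.isBounded (γ k).finite_toSet.isBounded
    have hxy : ∀ i : Fin m, ∃ y ∈ (γ k : Set ℝ), dist (x i) y < ε k := fun i =>
      Metric.exists_dist_lt_of_hausdorffDist_lt (hx i (Set.mem_univ i)) (hγd k) hfin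
    choose y hyγ hyd using hxy
    refine Set.mem_iUnion.2 ⟨fun i => ⟨y i, hyγ i⟩, ?_⟩
    rw [ht, Metric.mem_closedBall]
    exact (dist_pi_le_iff (hεpos k).le).2 fun i => (hyd i).le
  -- diameter bound
  have hdiam : ∀ k f, EMetric.diam (t k f) ≤ ENNReal.ofReal (2 * ε k) := by
    intro k f
    show EMetric.diam (Metric.closedBall (fun i => ((f i : ℝ))) (ε k)) ≤ _
    rw [← Metric.emetric_closedBall (hεpos k).le]
    calc EMetric.diam _ ≤ 2 * ENNReal.ofReal (ε k) := EMetric.diam_closedBall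
      _ = ENNReal.ofReal (2 * ε k) := by
        rw [ENNReal.ofReal_mul (by norm_num)]; norm_num
  -- radius tends to zero
  have hεle : ∀ k, ε k ≤ ((2:ℝ)^k)⁻¹ := by
    intro k
    apply inv_anti₀ (by positivity)
    exact pow_le_pow_right₀ one_le_two ((hn k).trans (Nat.le_self_pow two_ne_zero _))
  have hεtend : Filter.Tendsto ε Filter.atTop (nhds 0) := by
    apply squeeze_zero (fun k => (hεpos k).le) hεle
    simpa [one_div] using tendsto_pow_atTop_nhds_zero_of_lt_one (by norm_num : (0:ℝ) ≤ 1/2)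
      (by norm_num : (1/2:ℝ) < 1) |>.comp (Filter.tendsto_id (α := ℕ))
  have hrtend : Filter.Tendsto (fun k => ENNReal.ofReal (2 * ε k)) Filter.atTop (nhds 0) := by
    have : Filter.Tendsto (fun k => 2 * ε k) Filter.atTop (nhds 0) := by
      simpa using hεtend.const_mul (2:ℝ)
    simpa using ENNReal.tendsto_ofReal this
  -- cardinality bound
  have hcard : ∀ k, (γ k).card ≤ 2 ^ (n k) + 1 := by
    intro k
    have hsubim : γ k ⊆ (Finset.range (2 ^ n k + 1)).image (fun j : ℕ => (j : ℝ) / 2 ^ n k) := by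
      intro x hx
      obtain ⟨j, hj, rfl⟩ := hγsub k hx
      exact Finset.mem_image.2 ⟨j, Finset.mem_range.2 (Nat.lt_succ_of_le hj), rfl⟩
    calc (γ k).card ≤ _ := Finset.card_le_card hsubim
      _ ≤ _ := Finset.card_image_le
      _ = 2 ^ n k + 1 := Finset.card_range _
  have hcard2 : ∀ k, Fintype.card (Fin m → {x // x ∈ γ k}) ≤ 2 ^ ((n k + 1) * m) := by
    intro k
    rw [Fintype.card_fun, Fintype.card_coe, Fintype.card_fin]
    calc (γ k).card ^ m ≤ (2 ^ (n k) + 1) ^ m := Nat.pow_le_pow_left (hcard k) m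
      _ ≤ (2 ^ (n k + 1)) ^ m := Nat.pow_le_pow_left (by
          have : 1 ≤ 2 ^ n k := Nat.one_le_two_pow
          omega) m
      _ = 2 ^ ((n k + 1) * m) := by rw [← pow_mul]
  -- main: dimH ≤ 0
  refine le_antisymm ?_ zero_le
  refine dimH_le fun d hd => ?_
  rcases eq_or_lt_of_le (zero_le : 0 ≤ d) with h0 | hdpos
  · simp [← h0]
  exfalso
  have hdR : (0:ℝ) < (d:ℝ) := by exact_mod_cast hdpos
  set a : ℕ → ℝ := fun k => (2:ℝ) ^ ((n k + 1) * m) * (2 * ε k) ^ (d:ℝ) with ha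
  have hanonneg : ∀ k, 0 ≤ a k := by
    intro k
    have : (0:ℝ) < 2 * ε k := by positivity
    positivity
  -- sum bound
  have hsum : ∀ k, ∑ f : Fin m → {x // x ∈ γ k}, EMetric.diam (t k f) ^ (d:ℝ)
      ≤ ENNReal.ofReal (a k) := by
    intro k
    have h2ε : (0:ℝ) < 2 * ε k := by positivity
    calc ∑ f : Fin m → {x // x ∈ γ k}, EMetric.diam (t k f) ^ (d:ℝ)
        ≤ ∑ _f : Fin m → {x // x ∈ γ k}, ENNReal.ofReal (2 * ε k) ^ (d:ℝ) :=
          Finset.sum_le_sum fun f _ => ENNReal.rpow_le_rpow (hdiam k f) hdR.le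
      _ = (Fintype.card (Fin m → {x // x ∈ γ k}) : ENNReal) * ENNReal.ofReal (2 * ε k) ^ (d:ℝ) := by
          rw [Finset.sum_const, nsmul_eq_mul]; simp
      _ ≤ ((2 ^ ((n k + 1) * m) : ℕ) : ENNReal) * ENNReal.ofReal (2 * ε k) ^ (d:ℝ) := by
          gcongr
          exact_mod_cast hcard2 k
      _ = ENNReal.ofReal (a k) := by
          rw [ENNReal.ofReal_rpow_of_pos h2ε, ha]
          rw [← ENNReal.ofReal_natCast, ← ENNReal.ofReal_mul (by positivity)]
          push_cast
          ring_nf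
  -- a tends to 0
  have hatend : Filter.Tendsto a Filter.atTop (nhds 0) := by
    set K : ℕ := ⌈((m:ℝ) + 2) / (d:ℝ)⌉₊ + ⌈(m:ℝ) + (d:ℝ)⌉₊ with hK
    have hbound : ∀ k ≥ K, a k ≤ ((1:ℝ)/2) ^ k := by
      intro k hk
      have hNk : (k:ℝ) ≤ (n k : ℝ) := by exact_mod_cast hn k
      have hN1 : ((m:ℝ) + 2) / (d:ℝ) ≤ (n k : ℝ) := by
        calc ((m:ℝ) + 2) / (d:ℝ) ≤ (K:ℕ) := by
              push_cast [hK]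
              have := Nat.le_ceil (((m:ℝ) + 2) / (d:ℝ))
              linarith [Nat.cast_nonneg (α := ℝ) ⌈(m:ℝ) + (d:ℝ)⌉₊]
          _ ≤ (k:ℝ) := by exact_mod_cast hk
          _ ≤ _ := hNk
      have hdN : (m:ℝ) + 2 ≤ (d:ℝ) * (n k : ℝ) := by
        rw [div_le_iff₀ hdR] at hN1; linarith
      have hN2 : (m:ℝ) + (d:ℝ) ≤ (n k : ℝ) := by
        calc (m:ℝ) + (d:ℝ) ≤ (K:ℕ) := by
              push_cast [hK]
              have := Nat.le_ceil ((m:ℝ) + (d:ℝ))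
              linarith [Nat.cast_nonneg (α := ℝ) ⌈((m:ℝ) + 2) / (d:ℝ)⌉₊]
          _ ≤ (k:ℝ) := by exact_mod_cast hk
          _ ≤ _ := hNk
      -- rewrite a k as a rpow of 2
      have h2ε : 2 * ε k = (2:ℝ) ^ ((1:ℝ) - ((n k ^ 2 : ℕ) : ℝ)) := by
        rw [Real.rpow_sub two_pos, Real.rpow_one, Real.rpow_natCast]
        simp [hε, div_eq_mul_inv]
      have hak : a k = (2:ℝ) ^ ((((n k + 1) * m : ℕ) : ℝ) + ((1:ℝ) - ((n k ^ 2 : ℕ) : ℝ)) * (d:ℝ)) := by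
        simp only [ha]
        rw [h2ε, ← Real.rpow_natCast (2:ℝ) ((n k + 1) * m),
          ← Real.rpow_mul (by norm_num), ← Real.rpow_add two_pos]
      have hhalf : ((1:ℝ)/2) ^ k = (2:ℝ) ^ (-(k:ℝ)) := by
        rw [Real.rpow_neg (by norm_num), Real.rpow_natCast]
        simp [one_div, inv_pow]
      rw [hak, hhalf]
      apply Real.rpow_le_rpow_of_exponent_le one_le_two
      push_cast
      nlinarith [mul_le_mul_of_nonneg_right hdN (by positivity : (0:ℝ) ≤ (n k : ℝ))]
    have : Filter.Tendsto (fun k : ℕ => ((1:ℝ)/2) ^ k) Filter.atTop (nhds 0) :=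
      tendsto_pow_atTop_nhds_zero_of_lt_one (by norm_num) (by norm_num)
    refine squeeze_zero' ?_ ?_ this
    · exact Filter.eventually_atTop.2 ⟨0, fun k _ => hanonneg k⟩
    · exact Filter.eventually_atTop.2 ⟨K, hbound⟩
  -- conclude μH[d] S = 0
  have hmeas : μH[(d:ℝ)] S ≤ 0 := by
    have hle := Measure.hausdorffMeasure_le_liminf_sum (d:ℝ) S (fun k => ENNReal.ofReal (2 * ε k))
      hrtend t (Filter.Eventually.of_forall fun k => hdiam k)
      (Filter.Eventually.of_forall hcov)
    refine hle.trans ?_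
    have h1 : Filter.liminf (fun k => ∑ f : Fin m → {x // x ∈ γ k},
        EMetric.diam (t k f) ^ (d:ℝ)) Filter.atTop
        ≤ Filter.liminf (fun k => ENNReal.ofReal (a k)) Filter.atTop :=
      Filter.liminf_le_liminf (Filter.Eventually.of_forall hsum)
    have h2 : Filter.liminf (fun k => ENNReal.ofReal (a k)) Filter.atTop = 0 := by
      have : Filter.Tendsto (fun k => ENNReal.ofReal (a k)) Filter.atTop (nhds 0) := by
        simpa using ENNReal.tendsto_ofReal hatend
      exact this.liminf_eq
    rw [h2] at h1
    exact h1
  rw [le_zero_iff] at hmeas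
  rw [hS] at hmeas
  rw [hd] at hmeas
  exact ENNReal.top_ne_zero hmeas
end

section
/- For a typical compact set A ∈ K([0,1]), the m-fold sumset S^m(A) = {x₁ + ⋯ + x_m : x_i ∈ A} has Hausdorff dimension zero for every m ∈ ℕ. -/
open MeasureTheory Metric Set TopologicalSpace Filter Topology ENNReal NNReal

namespace Stmt13

def E (m : ℕ) (A : NonemptyCompacts (Set.Icc (0 : ℝ) 1)) : Set ℝ :=
  {s : ℝ | ∃ x : Fin m → Set.Icc (0 : ℝ) 1, (∀ i, x i ∈ A) ∧ s = ∑ i, (x i : ℝ)}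

def U (m k j : ℕ) : Set (NonemptyCompacts (Set.Icc (0 : ℝ) 1)) :=
  {A | ∃ (t : Finset ℝ) (r : ℝ), 0 < r ∧ r < 1/(j+1) ∧
    (E m A ⊆ ⋃ c ∈ t, Metric.ball c r) ∧ (t.card : ℝ) * (2*r) ^ ((1:ℝ)/(k+1)) < 1}

lemma edist_ne_top (A B : NonemptyCompacts (Set.Icc (0 : ℝ) 1)) :
    EMetric.hausdorffEdist (A : Set (Set.Icc (0:ℝ) 1)) (B : Set (Set.Icc (0:ℝ) 1)) ≠ ⊤ :=
  Metric.hausdorffEdist_ne_top_of_nonempty_of_bounded A.nonempty B.nonempty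
    A.isCompact.isBounded B.isCompact.isBounded

lemma isOpen_U (m k j : ℕ) : IsOpen (U m k j) := by
  rw [Metric.isOpen_iff]
  rintro A ⟨t, r, hr0, hrj, hcov, hlt⟩
  have hcont : ContinuousAt (fun x : ℝ => (t.card : ℝ) * (2*x) ^ ((1:ℝ)/(k+1))) r := by
    refine continuousAt_const.mul ?_
    have h2 : ContinuousAt (fun x : ℝ => 2*x) r := by fun_prop
    exact (Real.continuousAt_rpow_const _ _ (Or.inl (by positivity))).comp h2
  have h1 : ∀ᶠ x in 𝓝[>] r, (t.card : ℝ) * (2*x) ^ ((1:ℝ)/(k+1)) < 1 :=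
    ((hcont.eventually_lt continuousAt_const hlt)).filter_mono nhdsWithin_le_nhds
  have h2 : ∀ᶠ x in 𝓝[>] r, x < 1/((j:ℝ)+1) :=
    (isOpen_Iio.eventually_mem hrj).filter_mono nhdsWithin_le_nhds
  have h3 : ∀ᶠ x in 𝓝[>] r, r < x := eventually_mem_nhdsWithin
  obtain ⟨r', hlt', hrj', hrr'⟩ := (h1.and (h2.and h3)).exists
  have hpos := sub_pos.2 hrr'
  refine ⟨(r'-r)/(m+1), by positivity, ?_⟩
  intro B hB
  refine ⟨t, r', lt_trans hr0 hrr', hrj', ?_, hlt'⟩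
  rintro s ⟨x, hx, rfl⟩
  rw [mem_ball, Metric.NonemptyCompacts.dist_eq] at hB
  choose y hy hdy using fun i =>
    Metric.exists_dist_lt_of_hausdorffDist_lt (hx i) hB (edist_ne_top B A)
  have hyE : (∑ i, (y i : ℝ)) ∈ E m A := ⟨y, hy, rfl⟩
  obtain ⟨c, hc, hcball⟩ := Set.mem_iUnion₂.1 (hcov hyE)
  refine Set.mem_iUnion₂.2 ⟨c, hc, ?_⟩
  rw [mem_ball] at hcball ⊢
  have hsum : dist (∑ i, (x i : ℝ)) (∑ i, (y i : ℝ)) ≤ ∑ i, dist (x i : ℝ) (y i : ℝ) :=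
    dist_sum_sum_le _ _ _
  have hterm : ∀ i ∈ Finset.univ, dist (x i : ℝ) (y i : ℝ) ≤ (r'-r)/(m+1) := fun i _ => by
    have := hdy i
    rw [Subtype.dist_eq] at this
    exact this.le
  have hsum2 : ∑ i, dist (x i : ℝ) (y i : ℝ) ≤ m * ((r'-r)/(m+1)) := by
    simpa [nsmul_eq_mul] using Finset.sum_le_card_nsmul Finset.univ _ _ hterm
  have hkey : (m : ℝ) * ((r'-r)/(m+1)) < r' - r := by
    rw [div_eq_inv_mul, ← mul_assoc]
    have h1 : (m : ℝ) * ((m:ℝ)+1)⁻¹ < 1 := by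
      rw [mul_inv_lt_iff₀ (by positivity)]
      simp
    nlinarith [sub_pos.2 hrr']
  calc dist (∑ i, (x i : ℝ)) c ≤ dist (∑ i, (x i : ℝ)) (∑ i, (y i : ℝ)) + dist (∑ i, (y i : ℝ)) c :=
        dist_triangle _ _ _
    _ < r' := by nlinarith [hsum.trans hsum2]
lemma exists_small_r (N : ℕ) (b ε : ℝ) (hb : 0 < b) (hε : 0 < ε) :
    ∃ r : ℝ, 0 < r ∧ r < b ∧ (N:ℝ) * (2*r)^ε < 1 := by
  have hcont : ContinuousAt (fun x : ℝ => (N:ℝ) * (2*x)^ε) 0 := by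
    refine continuousAt_const.mul ?_
    have h2 : ContinuousAt (fun x : ℝ => 2*x) 0 := by fun_prop
    have := (Real.continuousAt_rpow_const (2*(0:ℝ)) ε (Or.inr hε.le)).comp h2
    simpa [Function.comp_def] using this
  have hval : (N:ℝ) * (2*(0:ℝ))^ε = 0 := by
    rw [mul_zero, Real.zero_rpow hε.ne', mul_zero]
  have h1 : ∀ᶠ x in 𝓝[>] (0:ℝ), (N:ℝ) * (2*x)^ε < 1 := by
    refine ((hcont.eventually_lt continuousAt_const ?_)).filter_mono nhdsWithin_le_nhds
    rw [hval]; norm_num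
  have h2 : ∀ᶠ x in 𝓝[>] (0:ℝ), x < b :=
    (isOpen_Iio.eventually_mem (by simpa using hb)).filter_mono nhdsWithin_le_nhds
  have h3 : ∀ᶠ x in 𝓝[>] (0:ℝ), 0 < x := eventually_mem_nhdsWithin
  obtain ⟨r, hr1, hr2, hr3⟩ := (h1.and (h2.and h3)).exists
  exact ⟨r, hr3, hr2, hr1⟩

lemma dense_U (m k j : ℕ) : Dense (U m k j) := by
  rw [Metric.dense_iff]
  intro A ε' hε'
  obtain ⟨t0, ht0A, ht0fin, ht0cov⟩ :=
    finite_approx_of_totallyBounded A.isCompact.totallyBounded (ε'/2) (by positivity)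
  have htne : t0.Nonempty := by
    obtain ⟨a, ha⟩ := A.nonempty
    obtain ⟨y, hy, -⟩ := Set.mem_iUnion₂.1 (ht0cov ha)
    exact ⟨y, hy⟩
  refine ⟨⟨⟨t0, ht0fin.isCompact⟩, htne⟩, ?_, ?_⟩
  · rw [mem_ball, Metric.NonemptyCompacts.dist_eq]
    have : hausdorffDist t0 (A : Set (Set.Icc (0:ℝ) 1)) ≤ ε'/2 := by
      refine hausdorffDist_le_of_mem_dist (by positivity) ?_ ?_
      · exact fun x hx => ⟨x, ht0A hx, by simp; positivity⟩
      · intro x hx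
        obtain ⟨y, hy, hxy⟩ := Set.mem_iUnion₂.1 (ht0cov hx)
        exact ⟨y, hy, (mem_ball.1 hxy).le⟩
    calc hausdorffDist (t0 : Set (Set.Icc (0:ℝ) 1)) A ≤ ε'/2 := this
      _ < ε' := by linarith
  · have hEfin : (E m ⟨⟨t0, ht0fin.isCompact⟩, htne⟩).Finite := by
      have h1 : (Set.pi univ (fun _ : Fin m => t0)).Finite := Set.Finite.pi fun _ => ht0fin
      refine (h1.image (fun x : Fin m → Set.Icc (0:ℝ) 1 => ∑ i, (x i : ℝ))).subset ?_
      rintro s ⟨x, hx, rfl⟩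
      exact ⟨x, fun i _ => hx i, rfl⟩
    obtain ⟨r, hr0, hrb, hlt⟩ := exists_small_r hEfin.toFinset.card (1/((j:ℝ)+1))
      (1/((k:ℝ)+1)) (by positivity) (by positivity)
    refine ⟨hEfin.toFinset, r, hr0, hrb, ?_, hlt⟩
    intro s hs
    exact Set.mem_iUnion₂.2 ⟨s, hEfin.mem_toFinset.2 hs, mem_ball_self hr0⟩

lemma dimH_eq_zero {A : NonemptyCompacts (Set.Icc (0 : ℝ) 1)}
    (hA : ∀ m k j, A ∈ U m k j) (m : ℕ) : dimH (E m A) = 0 := by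
  refine le_antisymm ?_ zero_le
  have key : ∀ k : ℕ, dimH (E m A) ≤ (((k:ℝ≥0)+1)⁻¹ : ℝ≥0) := by
    intro k
    set ε : ℝ := 1/((k:ℝ)+1) with hε
    have hε0 : 0 < ε := by positivity
    choose t r hr0 hrj hcov hlt using fun j => hA m k j
    have hmeas : μH[ε] (E m A) ≤ 1 := by
      have hle := Measure.hausdorffMeasure_le_liminf_sum ε (E m A)
        (l := atTop) (fun j : ℕ => ENNReal.ofReal (2/((j:ℝ)+1)))
        ?_ (fun j (i : Fin (t j).card) => Metric.ball (((t j).equivFin.symm i : ℝ)) (r j)) ?_ ?_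
      · refine hle.trans ?_
        refine liminf_le_of_frequently_le' (Frequently.of_forall fun j => ?_)
        have hterm : ∀ i ∈ Finset.univ, EMetric.diam
            (Metric.ball (((t j).equivFin.symm i : ℝ)) (r j)) ^ ε
              ≤ ENNReal.ofReal ((2 * r j) ^ ε) := by
          intro i _
          rw [← ENNReal.ofReal_rpow_of_pos (by linarith [hr0 j])]
          refine ENNReal.rpow_le_rpow ?_ hε0.le
          rw [← Metric.emetric_ball]
          refine (EMetric.diam_ball).trans ?_
          rw [ENNReal.ofReal_mul (by norm_num)]
          simp
        calc (∑ i : Fin (t j).card, EMetric.diam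
              (Metric.ball (((t j).equivFin.symm i : ℝ)) (r j)) ^ ε)
            ≤ (t j).card • ENNReal.ofReal ((2 * r j) ^ ε) := by
              simpa using Finset.sum_le_card_nsmul Finset.univ _ _ hterm
          _ = ENNReal.ofReal ((t j).card * (2 * r j) ^ ε) := by
              rw [nsmul_eq_mul, ← ENNReal.ofReal_natCast, ← ENNReal.ofReal_mul (by positivity)]
          _ ≤ 1 := by
              rw [← ENNReal.ofReal_one]
              exact ENNReal.ofReal_le_ofReal (hlt j).le
      · have h0 : Tendsto (fun j : ℕ => 2/((j:ℝ)+1)) atTop (𝓝 0) := by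
          have h := (_root_.tendsto_const_div_atTop_nhds_zero_nat (2:ℝ)).comp
            (tendsto_add_atTop_nat 1)
          refine h.congr fun j => ?_
          simp only [Function.comp]
          push_cast
          ring
        simpa using ENNReal.tendsto_ofReal h0
      · refine Eventually.of_forall fun j => fun i => ?_
        rw [← Metric.emetric_ball]
        refine (EMetric.diam_ball).trans ?_
        have : (2:ℝ≥0∞) * ENNReal.ofReal (r j) = ENNReal.ofReal (2 * r j) := by
          rw [ENNReal.ofReal_mul (by norm_num)]; simp
        rw [this]
        refine ENNReal.ofReal_le_ofReal ?_
        have h2 : 2/((j:ℝ)+1) = 2*(1/((j:ℝ)+1)) := by ring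
        have := hrj j
        linarith
      · refine Eventually.of_forall fun j => fun s hs => ?_
        obtain ⟨c, hc, hcb⟩ := Set.mem_iUnion₂.1 (hcov j hs)
        refine Set.mem_iUnion.2 ⟨(t j).equivFin ⟨c, hc⟩, ?_⟩
        simpa using hcb
    have hcoe : ((((k:ℝ≥0)+1)⁻¹ : ℝ≥0) : ℝ) = ε := by
      rw [hε]; push_cast; rw [one_div]
    refine dimH_le_of_hausdorffMeasure_ne_top ?_
    rw [hcoe]
    exact ne_top_of_le_ne_top one_ne_top hmeas
  have htend : Tendsto (fun k : ℕ => ((((k:ℝ≥0)+1)⁻¹ : ℝ≥0) : ℝ≥0∞)) atTop (𝓝 0) := by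
    have h1 : Tendsto (fun n : ℕ => ((n : ℝ≥0∞))⁻¹) atTop (𝓝 0) :=
      ENNReal.tendsto_inv_nat_nhds_zero
    have h2 := h1.comp (tendsto_add_atTop_nat 1)
    refine h2.congr fun k => ?_
    simp only [Function.comp]
    rw [ENNReal.coe_inv (by positivity)]
    norm_cast
    rw [ENNReal.coe_inv (by positivity), ENNReal.coe_natCast]
  exact ge_of_tendsto htend (Eventually.of_forall key)


end Stmt13

theorem stmt13 :
    IsMeagre {A : TopologicalSpace.NonemptyCompacts (Set.Icc (0 : ℝ) 1) |
      ¬ ∀ m : ℕ, dimH {s : ℝ | ∃ x : Fin m → Set.Icc (0 : ℝ) 1,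
          (∀ i, x i ∈ A) ∧ s = ∑ i, (x i : ℝ)} = 0} := by
  show _ ∈ residual _
  rw [mem_residual]
  refine ⟨⋂ p : ℕ × ℕ × ℕ, Stmt13.U p.1 p.2.1 p.2.2, ?_, ?_, ?_⟩
  · intro A hA
    simp only [Set.mem_iInter, Prod.forall] at hA
    simp only [Set.mem_compl_iff, Set.mem_setOf_eq, not_not]
    intro m
    exact Stmt13.dimH_eq_zero (fun m k j => hA m k j) m
  · exact IsGδ.iInter fun p => (Stmt13.isOpen_U _ _ _).isGδ
  · exact dense_iInter_of_isOpen (fun p => Stmt13.isOpen_U _ _ _)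
      (fun p => Stmt13.dense_U _ _ _)
end

section
/- For a typical compact set A ∈ K([0,1]), the Cartesian power A^m has Hausdorff dimension zero for every m ∈ ℕ. -/
open MeasureTheory Metric Set Filter Topology TopologicalSpace NNReal ENNReal

namespace Stmt14Aux

local notation "I01" => Set.Icc (0 : ℝ) 1

/-- The basic open dense sets. -/
def goodSet (m k j : ℕ) : Set (NonemptyCompacts I01) :=
  {A | ∃ (n : ℕ) (c : Fin n → I01) (δ : ℝ), 0 < δ ∧
    (A : Set I01) ⊆ ⋃ i, Metric.ball (c i) δ ∧
    (n : ℝ) ^ m * (2 * δ) ^ (((k : ℝ) + 1))⁻¹ < ((j : ℝ) + 1)⁻¹ ∧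
    2 * δ ≤ ((j : ℝ) + 1)⁻¹}

theorem isOpen_goodSet (m k j : ℕ) : IsOpen (goodSet m k j) := by
  rw [Metric.isOpen_iff]
  rintro A ⟨n, c, δ, hδ, hcov, hlt, hle⟩
  obtain ⟨ε, hε, hthick⟩ :=
    A.isCompact.exists_thickening_subset_open (isOpen_iUnion fun i => Metric.isOpen_ball) hcov
  refine ⟨ε, hε, fun B hB => ⟨n, c, δ, hδ, ?_, hlt, hle⟩⟩
  refine fun b hb => hthick ?_
  rw [Metric.mem_thickening_iff_infEdist_lt]
  refine lt_of_le_of_lt (EMetric.infEdist_le_hausdorffEdist_of_mem hb) ?_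
  have : Metric.hausdorffEDist (B : Set I01) (A : Set I01) = edist B A := rfl
  rw [this, edist_dist]
  exact ENNReal.ofReal_lt_ofReal_iff hε |>.2 (by simpa [Metric.mem_ball] using hB)

theorem dense_goodSet (m k j : ℕ) : Dense (goodSet m k j) := by
  rw [Metric.dense_iff]
  intro A ε hε
  obtain ⟨t, hts, htfin, htcov⟩ :=
    finite_approx_of_totallyBounded A.isCompact.totallyBounded (ε / 2) (by linarith)
  have htne : t.Nonempty := by
    obtain ⟨a, ha⟩ := A.nonempty
    obtain ⟨y, hy, -⟩ := Set.mem_iUnion₂.1 (htcov ha)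
    exact ⟨y, hy⟩
  set B : NonemptyCompacts I01 := ⟨⟨t, htfin.isCompact⟩, htne⟩ with hBdef
  obtain ⟨n, c, hcinj, hc⟩ := htfin.fin_param
  have half_nonneg : (0:ℝ) ≤ ε / 2 := by linarith
  have half_lt : ε / 2 < ε := by linarith
  refine ⟨B, ?_, ?_⟩
  · rw [Metric.mem_ball, NonemptyCompacts.dist_eq]
    have h1 : ∀ x ∈ (B : Set I01), ∃ y ∈ (A : Set I01), dist x y ≤ ε / 2 :=
      fun x hx => ⟨x, hts hx, by simp [half_nonneg]⟩
    have h2 : ∀ y ∈ (A : Set I01), ∃ x ∈ (B : Set I01), dist y x ≤ ε / 2 := by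
      intro y hy
      obtain ⟨x, hx, hxy⟩ := Set.mem_iUnion₂.1 (htcov hy)
      exact ⟨x, hx, le_of_lt (by simpa [Metric.mem_ball] using hxy)⟩
    exact lt_of_le_of_lt (Metric.hausdorffDist_le_of_mem_dist half_nonneg h1 h2) half_lt
  · -- B ∈ goodSet m k j
    set r : ℝ := ((j : ℝ) + 1)⁻¹ * ((n : ℝ) ^ m + 1)⁻¹ with hrdef
    have hnm : (0 : ℝ) < (n : ℝ) ^ m + 1 := by positivity
    have hj1 : (0 : ℝ) < (j : ℝ) + 1 := by positivity
    have hr0 : 0 < r := by positivity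
    have hr1 : r ≤ 1 := by
      rw [hrdef]
      have hnm0 : (0:ℝ) ≤ (n : ℝ) ^ m := by positivity
      calc ((j : ℝ) + 1)⁻¹ * ((n : ℝ) ^ m + 1)⁻¹ ≤ 1 * 1 := by
            apply mul_le_mul
            · rw [inv_le_one_iff₀]; right; linarith
            · rw [inv_le_one_iff₀]; right; linarith
            · positivity
            · norm_num
        _ = 1 := by norm_num
    refine ⟨n, c, r ^ (k + 1) / 2, by positivity, ?_, ?_, ?_⟩
    · intro x hx
      have : x ∈ t := hx
      rw [← hc] at this
      obtain ⟨i, rfl⟩ := this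
      exact mem_iUnion.2 ⟨i, by simp [Metric.mem_ball]; positivity⟩
    · have h2δ : 2 * (r ^ (k + 1) / 2) = r ^ (k + 1) := by ring
      rw [h2δ]
      have hrpow : (r ^ (k + 1)) ^ (((k : ℝ) + 1))⁻¹ = r := by
        rw [← Real.rpow_natCast r (k + 1), ← Real.rpow_mul hr0.le]
        push_cast
        rw [mul_inv_cancel₀ (by positivity), Real.rpow_one]
      rw [hrpow, hrdef]
      calc (n : ℝ) ^ m * (((j : ℝ) + 1)⁻¹ * ((n : ℝ) ^ m + 1)⁻¹)
          = ((j : ℝ) + 1)⁻¹ * ((n : ℝ) ^ m * ((n : ℝ) ^ m + 1)⁻¹) := by ring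
        _ < ((j : ℝ) + 1)⁻¹ * 1 := by
            apply mul_lt_mul_of_pos_left _ (by positivity)
            have hnm0 : (0:ℝ) ≤ (n : ℝ) ^ m := by positivity
            rw [mul_inv_lt_iff₀ hnm]
            linarith
        _ = ((j : ℝ) + 1)⁻¹ := by norm_num
    · have h2δ : 2 * (r ^ (k + 1) / 2) = r ^ (k + 1) := by ring
      rw [h2δ]
      calc r ^ (k + 1) ≤ r := pow_le_of_le_one hr0.le hr1 (Nat.succ_ne_zero k)
        _ ≤ ((j : ℝ) + 1)⁻¹ := by
            rw [hrdef]
            calc ((j : ℝ) + 1)⁻¹ * ((n : ℝ) ^ m + 1)⁻¹ ≤ ((j : ℝ) + 1)⁻¹ * 1 := by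
                  apply mul_le_mul_of_nonneg_left _ (by positivity)
                  have hnm0 : (0:ℝ) ≤ (n : ℝ) ^ m := by positivity
                  rw [inv_le_one_iff₀]; right; linarith
              _ = ((j : ℝ) + 1)⁻¹ := by norm_num

theorem dim_zero_of_mem (m k : ℕ) (A : NonemptyCompacts I01)
    (hA : ∀ j, A ∈ goodSet m k j) :
    μH[(((k : ℝ) + 1))⁻¹] (Set.univ.pi fun _ : Fin m =>
      ((↑) '' { a : I01 | a ∈ A } : Set ℝ)) = 0 := by
  choose n c δ hδ hcov hlt hle using hA
  set s : ℝ := (((k : ℝ) + 1))⁻¹ with hsdef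
  have hs0 : 0 < s := by positivity
  set T : Set (Fin m → ℝ) := Set.univ.pi fun _ : Fin m =>
      ((↑) '' { a : I01 | a ∈ A } : Set ℝ) with hTdef
  set t : ∀ j : ℕ, (Fin m → Fin (n j)) → Set (Fin m → ℝ) :=
    fun j f => Metric.ball (fun i => ((c j (f i) : ℝ))) (δ j) with htdef
  set r : ℕ → ℝ≥0∞ := fun j => ENNReal.ofReal (2 * δ j) with hrdef
  have hr : Tendsto r atTop (𝓝 0) := by
    have h0 : Tendsto (fun j : ℕ => 2 * δ j) atTop (𝓝 0) := by
      apply squeeze_zero (fun j => by linarith [hδ j]) (fun j => hle j)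
      have := tendsto_one_div_add_atTop_nhds_zero_nat (𝕜 := ℝ)
      simpa [one_div] using this
    have := ENNReal.tendsto_ofReal h0
    rw [ENNReal.ofReal_zero] at this
    exact this
  have ht : ∀ j f, EMetric.diam (t j f) ≤ r j := by
    intro j f
    show EMetric.diam (Metric.ball (fun i => ((c j (f i) : ℝ))) (δ j))
        ≤ ENNReal.ofReal (2 * δ j)
    rw [← Metric.emetric_ball]
    calc EMetric.diam _ ≤ 2 * ENNReal.ofReal (δ j) := EMetric.diam_ball
      _ = ENNReal.ofReal (2 * δ j) := by
          rw [ENNReal.ofReal_mul (by norm_num : (0:ℝ) ≤ 2)]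
          norm_num
  have hst : ∀ j, T ⊆ ⋃ f, t j f := by
    intro j g hg
    have hgi : ∀ i : Fin m, ∃ x : Fin (n j), dist (g i) ((c j x : I01) : ℝ) < δ j := by
      intro i
      obtain ⟨a, ha, hai⟩ := (Set.mem_univ_pi.1 hg) i
      obtain ⟨x, hx⟩ := mem_iUnion.1 (hcov j ha)
      refine ⟨x, ?_⟩
      have h' : dist a (c j x) < δ j := by simpa [Metric.mem_ball] using hx
      rw [← hai]
      rwa [Subtype.dist_eq] at h'
    choose f hf using hgi
    refine mem_iUnion.2 ⟨f, ?_⟩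
    exact Metric.mem_ball.2 ((dist_pi_lt_iff (hδ j)).2 hf)
  have hbound := MeasureTheory.Measure.hausdorffMeasure_le_liminf_sum s T r hr t
    (Eventually.of_forall ht) (Eventually.of_forall hst)
  have hsum : ∀ j, (∑ f : Fin m → Fin (n j), EMetric.diam (t j f) ^ s)
      ≤ ENNReal.ofReal (((j : ℝ) + 1)⁻¹) := by
    intro j
    calc (∑ f : Fin m → Fin (n j), EMetric.diam (t j f) ^ s)
        ≤ ∑ _f : Fin m → Fin (n j), (ENNReal.ofReal (2 * δ j)) ^ s := by
          apply Finset.sum_le_sum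
          intro f _
          exact ENNReal.rpow_le_rpow (ht j f) hs0.le
      _ = (Fintype.card (Fin m → Fin (n j))) • (ENNReal.ofReal (2 * δ j)) ^ s := by
          rw [Finset.sum_const, Finset.card_univ]
      _ = ((n j : ℝ≥0∞) ^ m) * (ENNReal.ofReal (2 * δ j)) ^ s := by
          rw [nsmul_eq_mul]
          congr 1
          rw [Fintype.card_fun]
          push_cast
          simp
      _ = ENNReal.ofReal ((n j : ℝ) ^ m * (2 * δ j) ^ s) := by
          rw [ENNReal.ofReal_rpow_of_pos (by linarith [hδ j])]
          rw [ENNReal.ofReal_mul (by positivity)]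
          congr 1
          rw [← ENNReal.ofReal_natCast (n j), ← ENNReal.ofReal_pow (by positivity)]
      _ ≤ ENNReal.ofReal (((j : ℝ) + 1)⁻¹) := ENNReal.ofReal_le_ofReal (hlt j).le
  have hlim : Filter.liminf (fun j => ∑ f : Fin m → Fin (n j), EMetric.diam (t j f) ^ s)
      Filter.atTop = 0 := by
    apply le_antisymm _ zero_le
    calc Filter.liminf (fun j => ∑ f : Fin m → Fin (n j), EMetric.diam (t j f) ^ s)
          Filter.atTop
        ≤ Filter.liminf (fun j : ℕ => ENNReal.ofReal (((j : ℝ) + 1)⁻¹)) Filter.atTop :=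
          liminf_le_liminf (Eventually.of_forall hsum)
      _ = 0 := by
          apply Filter.Tendsto.liminf_eq
          have h0 : Tendsto (fun j : ℕ => ((j : ℝ) + 1)⁻¹) atTop (𝓝 0) := by
            have := tendsto_one_div_add_atTop_nhds_zero_nat (𝕜 := ℝ)
            simpa [one_div] using this
          have := ENNReal.tendsto_ofReal h0
          simpa using this
  rw [← le_zero_iff]
  calc μH[s] T ≤ _ := hbound
    _ = 0 := hlim

end Stmt14Aux

open Stmt14Aux in
theorem stmt14 :
    IsMeagre {A : TopologicalSpace.NonemptyCompacts (Set.Icc (0 : ℝ) 1) |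
      ¬ ∀ m : ℕ, dimH (Set.univ.pi fun _ : Fin m =>
          ((↑) '' { a : Set.Icc (0 : ℝ) 1 | a ∈ A } : Set ℝ)) = 0} := by
  have hG : (⋂ (m : ℕ) (k : ℕ) (j : ℕ), goodSet m k j) ∈
      residual (TopologicalSpace.NonemptyCompacts (Set.Icc (0 : ℝ) 1)) := by
    refine (countable_iInter_mem).2 fun m => (countable_iInter_mem).2 fun k =>
      (countable_iInter_mem).2 fun j => ?_
    exact residual_of_dense_open (isOpen_goodSet m k j) (dense_goodSet m k j)
  have hmeagre : IsMeagre (⋂ (m : ℕ) (k : ℕ) (j : ℕ), goodSet m k j)ᶜ := by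
    rw [IsMeagre, compl_compl]
    exact hG
  apply hmeagre.mono
  intro A hA
  simp only [Set.mem_setOf_eq] at hA
  simp only [Set.mem_compl_iff, Set.mem_iInter]
  intro hmem
  apply hA
  intro m
  have hdim : ∀ k : ℕ, dimH (Set.univ.pi fun _ : Fin m =>
      ((↑) '' { a : Set.Icc (0 : ℝ) 1 | a ∈ A } : Set ℝ)) ≤
      ((((k : ℝ≥0) + 1))⁻¹ : ℝ≥0) := by
    intro k
    apply dimH_le_of_hausdorffMeasure_ne_top
    have h0 := dim_zero_of_mem m k A (fun j => hmem m k j)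
    have hcoe : ((((k : ℝ≥0) + 1))⁻¹ : ℝ≥0) = ((((k : ℝ) + 1))⁻¹ : ℝ) := by
      push_cast
      simp
    rw [hcoe, h0]
    exact ENNReal.zero_ne_top
  by_contra hne
  obtain ⟨N, hN⟩ := ENNReal.exists_inv_nat_lt hne
  have h1 := hdim N
  have h2 : (((((N : ℝ≥0) + 1))⁻¹ : ℝ≥0) : ℝ≥0∞) ≤ ((N : ℝ≥0∞))⁻¹ := by
    rw [ENNReal.coe_inv (by positivity)]
    apply ENNReal.inv_le_inv.2
    push_cast
    simp [le_add_iff_nonneg_right]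
  exact absurd (h1.trans h2) (not_le.2 hN)
end

section
/- For a typical compact set A ∈ K([0,1]) and any real polynomial P(x) = Σ_{k=0}^n a_k x^k, the set P̃(A) = Σ_{k=0}^n a_k T^k(A) has Hausdorff dimension zero, where T^k(A) = {x₁⋯x_k : x_i ∈ A} and the sum is the sumset of the dilated sets a_k T^k(A). -/
open MeasureTheory Metric Set TopologicalSpace Filter Topology ENNReal NNReal

lemma isOpen_setOf_subset {α : Type*} [MetricSpace α] {U : Set α} (hU : IsOpen U) :
    IsOpen {A : NonemptyCompacts α | (A : Set α) ⊆ U} := by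
  rw [EMetric.isOpen_iff]
  rintro A (hA : (A : Set α) ⊆ U)
  obtain ⟨δ, δpos, hδ⟩ := A.isCompact.exists_thickening_subset_open hU hA
  refine ⟨ENNReal.ofReal δ, by simp [δpos], fun B hB => fun b hb => ?_⟩
  have h1 : EMetric.hausdorffEdist (B : Set α) (A : Set α) < ENNReal.ofReal δ := by
    rw [EMetric.mem_ball] at hB; exact hB
  obtain ⟨c, hcA, hbc⟩ := EMetric.exists_edist_lt_of_hausdorffEdist_lt hb h1
  exact hδ ((Metric.mem_thickening_iff_exists_edist_lt _ _).2 ⟨c, hcA, hbc⟩)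

def Egd (j p : ℕ) : Set (NonemptyCompacts (Set.Icc (0:ℝ) 1)) :=
  {A | ∃ m : ℕ, p ≤ m ∧ ∃ F : Finset (Set.Icc (0:ℝ) 1),
    F.card ^ j ≤ 2 ^ m ∧ (A : Set (Set.Icc (0:ℝ) 1)) ⊆ ⋃ y ∈ F, Metric.ball y ((1/2 : ℝ) ^ m)}

lemma isOpen_Egd (j p : ℕ) : IsOpen (Egd j p) := by
  rw [isOpen_iff_mem_nhds]
  rintro A ⟨m, hm, F, hF, hsub⟩
  have hU : IsOpen (⋃ y ∈ F, Metric.ball y ((1/2:ℝ)^m)) :=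
    isOpen_biUnion fun _ _ => Metric.isOpen_ball
  exact Filter.mem_of_superset ((isOpen_setOf_subset hU).mem_nhds hsub)
    (fun B hB => ⟨m, hm, F, hF, hB⟩)

lemma dense_Egd (j p : ℕ) : Dense (Egd j p) := by
  rw [Metric.dense_iff]
  intro A ε hε
  obtain ⟨t, htA, htfin, hcov⟩ := (totallyBounded_iff_subset.1 A.isCompact.totallyBounded)
    _ (Metric.dist_mem_uniformity (half_pos hε))
  have tne : t.Nonempty := by
    obtain ⟨x, hx⟩ := A.nonempty
    obtain ⟨y, hy, -⟩ := Set.mem_iUnion₂.1 (hcov hx)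
    exact ⟨y, hy⟩
  set B : NonemptyCompacts (Set.Icc (0:ℝ) 1) := ⟨⟨t, htfin.isCompact⟩, tne⟩
  refine ⟨B, ?_, ?_⟩
  · have hed : edist B A ≤ ENNReal.ofReal (ε/2) := by
      refine EMetric.hausdorffEdist_le_of_mem_edist ?_ ?_
      · intro x hx
        exact ⟨x, htA hx, by simp⟩
      · intro x hx
        obtain ⟨y, hy, hxy⟩ := Set.mem_iUnion₂.1 (hcov hx)
        exact ⟨y, hy, by rw [edist_dist]; exact ENNReal.ofReal_le_ofReal hxy.le⟩
    have : dist B A ≤ ε/2 := by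
      rw [dist_edist]
      exact ENNReal.toReal_le_of_le_ofReal (half_pos hε).le hed
    exact Metric.mem_ball.2 (lt_of_le_of_lt this (half_lt_self hε))
  · refine ⟨max p (htfin.toFinset.card ^ j), le_max_left _ _, htfin.toFinset, ?_, ?_⟩
    · exact le_trans (Nat.lt_two_pow_self).le
        (Nat.pow_le_pow_right (by norm_num) (le_max_right _ _))
    · intro x hx
      have hx' : x ∈ htfin.toFinset := htfin.mem_toFinset.2 hx
      exact Set.mem_biUnion hx' (Metric.mem_ball_self (by positivity))

lemma prod_est' : ∀ {k : ℕ} (x y : Fin k → ℝ), (∀ i, x i ∈ Set.Icc (0:ℝ) 1) →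
    (∀ i, y i ∈ Set.Icc (0:ℝ) 1) → |∏ i, x i - ∏ i, y i| ≤ ∑ i, |x i - y i| := by
  intro k
  induction k with
  | zero => intro x y _ _; simp
  | succ k ih =>
    intro x y hx hy
    rw [Fin.prod_univ_succ, Fin.prod_univ_succ, Fin.sum_univ_succ]
    have h1 : x 0 * ∏ i, x (Fin.succ i) - y 0 * ∏ i, y (Fin.succ i)
        = x 0 * (∏ i, x (Fin.succ i) - ∏ i, y (Fin.succ i)) + (x 0 - y 0) * ∏ i, y (Fin.succ i) := by ring
    rw [h1]
    have hx0 : |x 0| ≤ 1 := abs_le.2 ⟨by linarith [(hx 0).1], (hx 0).2⟩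
    have hpy : |∏ i, y (Fin.succ i)| ≤ 1 := by
      rw [abs_of_nonneg (Finset.prod_nonneg fun i _ => (hy (Fin.succ i)).1)]
      exact Finset.prod_le_one (fun i _ => (hy (Fin.succ i)).1) (fun i _ => (hy (Fin.succ i)).2)
    calc |x 0 * (∏ i, x (Fin.succ i) - ∏ i, y (Fin.succ i)) + (x 0 - y 0) * ∏ i, y (Fin.succ i)|
        ≤ |x 0| * |∏ i, x (Fin.succ i) - ∏ i, y (Fin.succ i)| + |x 0 - y 0| * |∏ i, y (Fin.succ i)| := by
          rw [← abs_mul, ← abs_mul]; exact abs_add_le _ _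
      _ ≤ 1 * (∑ i, |x (Fin.succ i) - y (Fin.succ i)|) + |x 0 - y 0| * 1 := by
          exact add_le_add
            (mul_le_mul hx0 (ih _ _ (fun i => hx (Fin.succ i)) (fun i => hy (Fin.succ i)))
              (abs_nonneg _) zero_le_one)
            (mul_le_mul_of_nonneg_left hpy (abs_nonneg _))
      _ = |x 0 - y 0| + ∑ i, |x (Fin.succ i) - y (Fin.succ i)| := by ring

lemma poly_est (n : ℕ) (a : ℕ → ℝ) (x y : (k : Fin (n+1)) → Fin (k:ℕ) → Set.Icc (0:ℝ) 1)
    (ρ : ℝ) (hρ : 0 ≤ ρ) (h : ∀ k i, dist (x k i) (y k i) ≤ ρ) :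
    |(∑ k : Fin (n+1), a k * ∏ i : Fin (k:ℕ), (x k i : ℝ)) -
      ∑ k : Fin (n+1), a k * ∏ i : Fin (k:ℕ), (y k i : ℝ)|
      ≤ (∑ k : Fin (n+1), |a k| * k) * ρ := by
  rw [← Finset.sum_sub_distrib]
  calc |∑ k : Fin (n+1), (a k * ∏ i : Fin (k:ℕ), (x k i : ℝ) - a k * ∏ i, (y k i : ℝ))|
      ≤ ∑ k : Fin (n+1), |a k * ∏ i : Fin (k:ℕ), (x k i : ℝ) - a k * ∏ i, (y k i : ℝ)| :=
        Finset.abs_sum_le_sum_abs _ _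
    _ ≤ ∑ k : Fin (n+1), |a k| * ((k : ℕ) * ρ) := by
        refine Finset.sum_le_sum fun k _ => ?_
        rw [← mul_sub, abs_mul]
        refine mul_le_mul_of_nonneg_left ?_ (abs_nonneg _)
        calc |(∏ i : Fin (k:ℕ), (x k i : ℝ)) - ∏ i, (y k i : ℝ)|
            ≤ ∑ i : Fin (k:ℕ), |(x k i : ℝ) - (y k i : ℝ)| :=
              prod_est' _ _ (fun i => (x k i).2) (fun i => (y k i).2)
          _ ≤ ∑ _i : Fin (k:ℕ), ρ := by
              refine Finset.sum_le_sum fun i _ => ?_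
              have := h k i
              rwa [Subtype.dist_eq, Real.dist_eq] at this
          _ = (k:ℕ) * ρ := by simp [mul_comm]
    _ = (∑ k : Fin (n+1), |a k| * k) * ρ := by
        rw [Finset.sum_mul]; exact Finset.sum_congr rfl fun k _ => by ring
lemma card_pi_fin (n : ℕ) (F : Finset (Set.Icc (0:ℝ) 1)) :
    Fintype.card ((k : Fin (n+1)) → Fin (k:ℕ) → {y // y ∈ F}) =
      F.card ^ (∑ k : Fin (n+1), (k:ℕ)) := by
  rw [Fintype.card_pi]
  simp only [Fintype.card_fun, Fintype.card_coe, Fintype.card_fin]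
  exact Finset.prod_pow_eq_pow_sum _ _ _

set_option maxHeartbeats 2000000 in
lemma key (A : TopologicalSpace.NonemptyCompacts (Set.Icc (0:ℝ) 1))
    (hA : ∀ j p : ℕ, A ∈ Egd j p) (n : ℕ) (a : ℕ → ℝ) :
    dimH {s : ℝ | ∃ x : (k : Fin (n + 1)) → Fin (k : ℕ) → Set.Icc (0 : ℝ) 1,
      (∀ k i, x k i ∈ A) ∧
      s = ∑ k : Fin (n + 1), a k * ∏ i : Fin (k : ℕ), (x k i : ℝ)} = 0 := by
  set S := {s : ℝ | ∃ x : (k : Fin (n + 1)) → Fin (k : ℕ) → Set.Icc (0 : ℝ) 1,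
      (∀ k i, x k i ∈ A) ∧
      s = ∑ k : Fin (n + 1), a k * ∏ i : Fin (k : ℕ), (x k i : ℝ)} with hS
  have main : ∀ d : ℝ≥0, 0 < d → μH[(d:ℝ)] S = 0 := by
    intro d hd
    have hdR : (0:ℝ) < d := hd
    set N : ℕ := ∑ k : Fin (n+1), (k:ℕ) with hN
    obtain ⟨j, hj⟩ := exists_nat_gt ((N:ℝ)/d)
    have hjR : 0 < (j:ℝ) := lt_of_le_of_lt (div_nonneg (Nat.cast_nonneg _) hdR.le) hj
    have hjne : (j:ℝ) ≠ 0 := hjR.ne'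
    have hNd : (N:ℝ) / j < d := by
      rw [div_lt_iff₀ hjR]
      calc (N:ℝ) = (N/d) * d := by field_simp
        _ < j * d := mul_lt_mul_of_pos_right hj hdR
        _ = d * j := mul_comm _ _
    choose m hm F hcard hcov using fun p => hA j p
    set L : ℝ := ∑ k : Fin (n+1), |a k| * k with hL
    have hL0 : 0 ≤ L := Finset.sum_nonneg fun k _ =>
      mul_nonneg (abs_nonneg _) (Nat.cast_nonneg _)
    set ρ : ℕ → ℝ := fun p => (1/2:ℝ) ^ (m p) with hρ
    have hρdef : ∀ p, ρ p = (1/2:ℝ) ^ (m p) := fun _ => rfl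
    have hρ0 : ∀ p, 0 < ρ p := fun p => by rw [hρdef]; positivity
    have hρle : ∀ p, ρ p ≤ (1/2:ℝ)^p := fun p => by
      rw [hρdef]; exact pow_le_pow_of_le_one (by norm_num) (by norm_num) (hm p)
    set t : ∀ p : ℕ, ((k : Fin (n+1)) → Fin (k:ℕ) → {y // y ∈ F p}) → Set ℝ := fun p c =>
      EMetric.closedBall (∑ k : Fin (n+1), a k * ∏ i : Fin (k:ℕ), ((c k i : Set.Icc (0:ℝ) 1) : ℝ))
        (ENNReal.ofReal (L * ρ p)) with ht
    have htdef : ∀ p c, t p c =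
      EMetric.closedBall (∑ k : Fin (n+1), a k * ∏ i : Fin (k:ℕ), ((c k i : Set.Icc (0:ℝ) 1) : ℝ))
        (ENNReal.ofReal (L * ρ p)) := fun _ _ => rfl
    set r : ℕ → ℝ≥0∞ := fun p => ENNReal.ofReal (2 * L * ρ p) with hr
    have hrdef : ∀ p, r p = ENNReal.ofReal (2 * L * ρ p) := fun _ => rfl
    have hrval : ∀ p, r p = 2 * ENNReal.ofReal (L * ρ p) := by
      intro p
      rw [hrdef, mul_assoc, ENNReal.ofReal_mul (by norm_num : (0:ℝ) ≤ 2)]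
      norm_num
    have hrt : Tendsto r atTop (𝓝 0) := by
      have h1 : Tendsto (fun p : ℕ => ENNReal.ofReal (2 * L * (1/2:ℝ)^p)) atTop (𝓝 0) := by
        have h2 : Tendsto (fun p : ℕ => 2 * L * (1/2:ℝ)^p) atTop (𝓝 0) := by
          simpa using (tendsto_pow_atTop_nhds_zero_of_lt_one (by norm_num : (0:ℝ) ≤ 1/2)
            (by norm_num : (1/2:ℝ) < 1)).const_mul (2*L)
        simpa [Function.comp_def] using (ENNReal.continuous_ofReal.tendsto 0).comp h2
      refine tendsto_of_tendsto_of_tendsto_of_le_of_le tendsto_const_nhds h1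
        (fun p => zero_le) (fun p => ?_)
      rw [hrdef]
      refine ENNReal.ofReal_le_ofReal ?_
      have := hρle p
      nlinarith [hρ0 p, hL0]
    have hdiam : ∀ p, ∀ c, EMetric.diam (t p c) ≤ r p := by
      intro p c
      rw [hrval p, htdef]
      exact EMetric.diam_closedBall
    have hcover : ∀ p, S ⊆ ⋃ c, t p c := by
      intro p s hs
      obtain ⟨x, hxA, rfl⟩ := hs
      have choice : ∀ (k : Fin (n+1)) (i : Fin (k:ℕ)),
          ∃ y, y ∈ F p ∧ dist (x k i) y < ρ p := by
        intro k i
        obtain ⟨y, hy, hxy⟩ := Set.mem_iUnion₂.1 (hcov p (hxA k i))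
        exact ⟨y, hy, by rw [hρdef]; exact Metric.mem_ball.1 hxy⟩
      choose c hcF hcd using choice
      refine Set.mem_iUnion.2 ⟨fun k i => ⟨c k i, hcF k i⟩, ?_⟩
      rw [htdef]
      change edist _ _ ≤ _; rw [edist_dist]
      refine ENNReal.ofReal_le_ofReal ?_
      rw [Real.dist_eq]
      exact poly_est n a x (fun k i => c k i) (ρ p) (hρ0 p).le (fun k i => (hcd k i).le)
    have key1 : μH[(d:ℝ)] S ≤
        liminf (fun p => ∑ c, EMetric.diam (t p c) ^ (d:ℝ)) atTop :=
      MeasureTheory.Measure.hausdorffMeasure_le_liminf_sum (d:ℝ) S r hrt t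
        (Eventually.of_forall hdiam) (Eventually.of_forall hcover)
    set G : ℕ → ℝ := fun p => ((F p).card : ℝ)^N * (2*L*ρ p)^(d:ℝ) with hG
    have hGdef : ∀ p, G p = ((F p).card : ℝ)^N * (2*L*ρ p)^(d:ℝ) := fun _ => rfl
    have hG0 : ∀ p, 0 ≤ G p := fun p => by
      rw [hGdef]
      exact mul_nonneg (by positivity) (Real.rpow_nonneg (by nlinarith [hρ0 p]) _)
    have hsum : ∀ p, (∑ c, EMetric.diam (t p c) ^ (d:ℝ)) ≤ ENNReal.ofReal (G p) := by
      intro p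
      have step1 : (∑ c, EMetric.diam (t p c) ^ (d:ℝ)) ≤
          ∑ _c : ((k : Fin (n+1)) → Fin (k:ℕ) → {y // y ∈ F p}), (r p) ^ (d:ℝ) :=
        Finset.sum_le_sum fun c _ => ENNReal.rpow_le_rpow (hdiam p c) d.coe_nonneg
      have step2 : (∑ _c : ((k : Fin (n+1)) → Fin (k:ℕ) → {y // y ∈ F p}), (r p) ^ (d:ℝ))
          = ((F p).card ^ N : ℕ) * (r p)^(d:ℝ) := by
        rw [Finset.sum_const, Finset.card_univ, card_pi_fin, ← hN, nsmul_eq_mul]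
      have step3 : (((F p).card ^ N : ℕ) : ℝ≥0∞) * (r p)^(d:ℝ) = ENNReal.ofReal (G p) := by
        rw [hrdef, ENNReal.ofReal_rpow_of_nonneg (by nlinarith [hρ0 p] : (0:ℝ) ≤ 2*L*ρ p)
          d.coe_nonneg, hGdef]
        rw [← ENNReal.ofReal_natCast ((F p).card ^ N),
          ← ENNReal.ofReal_mul (by positivity)]
        congr 1
        push_cast
        ring
      calc (∑ c, EMetric.diam (t p c) ^ (d:ℝ)) ≤ _ := step1
        _ = _ := step2
        _ = _ := step3
    set q : ℝ := (2:ℝ) ^ ((N:ℝ)/j - (d:ℝ)) with hq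
    have hq0 : 0 < q := Real.rpow_pos_of_pos (by norm_num) _
    have hq1 : q < 1 := Real.rpow_lt_one_of_one_lt_of_neg (by norm_num) (by linarith)
    have hGle : ∀ p, G p ≤ (2*L)^(d:ℝ) * q ^ p := by
      intro p
      have h2L0 : (0:ℝ) ≤ 2*L := by linarith
      have hcF : ((F p).card : ℝ) ^ (j:ℝ) ≤ (2:ℝ) ^ ((m p : ℝ)) := by
        rw [Real.rpow_natCast, Real.rpow_natCast]
        exact_mod_cast hcard p
      have hcle : ((F p).card : ℝ) ≤ (2:ℝ) ^ ((m p : ℝ)/j) := by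
        have h1 : (((F p).card : ℝ) ^ (j:ℝ)) ^ ((1:ℝ)/j) ≤
            ((2:ℝ) ^ ((m p : ℝ))) ^ ((1:ℝ)/j) :=
          Real.rpow_le_rpow (Real.rpow_nonneg (Nat.cast_nonneg _) _) hcF (by positivity)
        rwa [← Real.rpow_mul (Nat.cast_nonneg _), mul_one_div, div_self hjne,
          Real.rpow_one, ← Real.rpow_mul (by norm_num : (0:ℝ) ≤ 2), mul_one_div] at h1
      have hcN : ((F p).card : ℝ) ^ N ≤ (2:ℝ) ^ ((m p : ℝ) * ((N:ℝ)/j)) := by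
        calc ((F p).card : ℝ) ^ N = (((F p).card : ℝ)) ^ (N:ℝ) := (Real.rpow_natCast _ _).symm
          _ ≤ ((2:ℝ) ^ ((m p : ℝ)/j)) ^ (N:ℝ) :=
            Real.rpow_le_rpow (Nat.cast_nonneg _) hcle (Nat.cast_nonneg _)
          _ = (2:ℝ) ^ ((m p : ℝ) * ((N:ℝ)/j)) := by
            rw [← Real.rpow_mul (by norm_num : (0:ℝ) ≤ 2)]
            ring_nf
      have hρd : (ρ p) ^ (d:ℝ) = (2:ℝ) ^ (-(m p : ℝ) * (d:ℝ)) := by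
        rw [hρdef]
        have h3 : ((1:ℝ)/2) ^ (m p) = (2:ℝ) ^ (-(m p:ℝ)) := by
          rw [Real.rpow_neg (by norm_num), Real.rpow_natCast, one_div, inv_pow]
        rw [h3, ← Real.rpow_mul (by norm_num : (0:ℝ) ≤ 2)]
      have hsplit : (2*L*ρ p)^(d:ℝ) = (2*L)^(d:ℝ) * (ρ p)^(d:ℝ) :=
        Real.mul_rpow h2L0 (hρ0 p).le
      have hqm : (2:ℝ) ^ ((m p : ℝ) * ((N:ℝ)/j)) * (2:ℝ) ^ (-(m p : ℝ) * (d:ℝ)) = q ^ (m p) := by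
        rw [hq, ← Real.rpow_add (by norm_num : (0:ℝ) < 2),
          ← Real.rpow_natCast ((2:ℝ) ^ ((N:ℝ)/(j:ℝ) - (d:ℝ))) (m p),
          ← Real.rpow_mul (by norm_num : (0:ℝ) ≤ 2)]
        congr 1
        ring
      calc G p = ((F p).card : ℝ)^N * ((2*L)^(d:ℝ) * (ρ p)^(d:ℝ)) := by
            rw [hGdef, hsplit]
        _ ≤ (2:ℝ) ^ ((m p : ℝ) * ((N:ℝ)/j)) * ((2*L)^(d:ℝ) * (ρ p)^(d:ℝ)) :=
            mul_le_mul_of_nonneg_right hcN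
              (mul_nonneg (Real.rpow_nonneg h2L0 _) (Real.rpow_nonneg (hρ0 p).le _))
        _ = (2*L)^(d:ℝ) * ((2:ℝ) ^ ((m p : ℝ) * ((N:ℝ)/j)) * (2:ℝ) ^ (-(m p : ℝ) * (d:ℝ))) := by
            rw [hρd]; ring
        _ = (2*L)^(d:ℝ) * q ^ (m p) := by rw [hqm]
        _ ≤ (2*L)^(d:ℝ) * q ^ p :=
            mul_le_mul_of_nonneg_left
              (pow_le_pow_of_le_one hq0.le hq1.le (hm p)) (Real.rpow_nonneg h2L0 _)
    have hGt : Tendsto G atTop (𝓝 0) := by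
      refine squeeze_zero hG0 hGle ?_
      simpa using (tendsto_pow_atTop_nhds_zero_of_lt_one hq0.le hq1).const_mul ((2*L)^(d:ℝ))
    have hoGt : Tendsto (fun p => ENNReal.ofReal (G p)) atTop (𝓝 0) := by
      simpa [Function.comp_def] using (ENNReal.continuous_ofReal.tendsto 0).comp hGt
    have hliminf : liminf (fun p => ∑ c, EMetric.diam (t p c) ^ (d:ℝ)) atTop ≤ 0 :=
      le_trans (liminf_le_liminf (Eventually.of_forall hsum)) (le_of_eq hoGt.liminf_eq)
    exact le_antisymm (key1.trans hliminf) (zero_le)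
  refine le_antisymm (dimH_le fun d' hd' => ?_) (zero_le)
  rcases eq_zero_or_pos d' with h0 | hpos
  · simp [h0]
  · exact absurd hd' (by rw [main d' hpos]; exact ENNReal.zero_ne_top)

theorem stmt15 :
    IsMeagre {A : TopologicalSpace.NonemptyCompacts (Set.Icc (0 : ℝ) 1) |
      ¬ ∀ (n : ℕ) (a : ℕ → ℝ),
          dimH {s : ℝ | ∃ x : (k : Fin (n + 1)) → Fin (k : ℕ) → Set.Icc (0 : ℝ) 1,
            (∀ k i, x k i ∈ A) ∧
            s = ∑ k : Fin (n + 1), a k * ∏ i : Fin (k : ℕ), (x k i : ℝ)} = 0} := by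
  have hres : (⋂ j : ℕ, ⋂ p : ℕ, Egd j p) ∈ residual _ :=
    (countable_iInter_mem).2 fun j => (countable_iInter_mem).2 fun p =>
      residual_of_dense_open (isOpen_Egd j p) (dense_Egd j p)
  rw [IsMeagre]
  refine Filter.mem_of_superset hres fun A hA => ?_
  simp only [Set.mem_compl_iff, Set.mem_setOf_eq, not_not]
  intro n a
  exact key A (fun j p => Set.mem_iInter.1 (Set.mem_iInter.1 hA j) p) n a
end

section
/- Fix x ∈ [0,1]. A subset A ⊆ {x} × ℝ is nowhere dense in the vertical line V_x = {x} × ℝ if and only if C_A = {f ∈ C([0,1]) : (x, f(x)) ∈ A} is nowhere dense in C([0,1]) with the supremum metric. -/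
theorem stmt18 (x : Set.Icc (0 : ℝ) 1) (A : Set ℝ) :
    IsNowhereDense A ↔
      IsNowhereDense {f : C(Set.Icc (0 : ℝ) 1, ℝ) | f x ∈ A} := by
  have hc : Continuous (fun f : C(Set.Icc (0 : ℝ) 1, ℝ) => f x) :=
    continuous_eval_const x
  have hsurj : Function.Surjective (fun f : C(Set.Icc (0 : ℝ) 1, ℝ) => f x) :=
    fun c => ⟨ContinuousMap.const _ c, rfl⟩
  have ho : IsOpenMap (fun f : C(Set.Icc (0 : ℝ) 1, ℝ) => f x) := by
    have := (ContinuousMap.evalCLM ℝ x : C(Set.Icc (0 : ℝ) 1, ℝ) →L[ℝ] ℝ)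
    exact ContinuousLinearMap.isOpenMap (f := (ContinuousMap.evalCLM (R := ℝ) x : C(Set.Icc (0 : ℝ) 1, ℝ) →L[ℝ] ℝ)) hsurj
  have key : {f : C(Set.Icc (0 : ℝ) 1, ℝ) | f x ∈ A}
      = (fun f : C(Set.Icc (0 : ℝ) 1, ℝ) => f x) ⁻¹' A := rfl
  rw [key]
  unfold IsNowhereDense
  rw [← ho.preimage_closure_eq_closure_preimage hc,
    ← ho.preimage_interior_eq_interior_preimage hc]
  constructor
  · intro h; rw [h]; simp
  · intro h
    ext y
    simp only [Set.mem_empty_iff_false, iff_false]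
    intro hy
    obtain ⟨f, rfl⟩ := hsurj y
    exact absurd (h ▸ hy : f ∈ (∅ : Set _)) (by simp)
end

section
/- The graph of a typical continuous function f ∈ C([0,1]) contains no point with both coordinates rational; i.e., the set of f ∈ C([0,1]) whose graph contains a rational point of the plane is of first category in C([0,1]). -/
open Set

lemma aux_closed (t₀ : Set.Icc (0:ℝ) 1) (c : ℝ) :
    IsClosed {f : C(Set.Icc (0 : ℝ) 1, ℝ) | c = f t₀} := by
  have : {f : C(Set.Icc (0 : ℝ) 1, ℝ) | c = f t₀}
      = (fun f : C(Set.Icc (0 : ℝ) 1, ℝ) => f t₀) ⁻¹' {c} := by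
    ext f; simp [eq_comm]
  rw [this]
  exact isClosed_singleton.preimage (continuous_eval_const t₀)

lemma aux_dense (t₀ : Set.Icc (0:ℝ) 1) (c : ℝ) :
    Dense {f : C(Set.Icc (0 : ℝ) 1, ℝ) | c = f t₀}ᶜ := by
  rw [Metric.dense_iff]
  intro f r hr
  by_cases h : c = f t₀
  · refine ⟨f + ContinuousMap.const _ (r/2), ?_, ?_⟩
    · rw [Metric.mem_ball]
      have : dist (f + ContinuousMap.const _ (r/2)) f ≤ r/2 := by
        rw [ContinuousMap.dist_le (by linarith)]
        intro x
        simp [Real.dist_eq]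
        rw [abs_of_nonneg (by linarith)]
      linarith
    · simp only [mem_compl_iff, mem_setOf_eq, ContinuousMap.add_apply,
        ContinuousMap.const_apply]
      rw [← h]
      intro hc
      linarith
  · exact ⟨f, Metric.mem_ball_self hr, h⟩

theorem stmt19 :
    IsMeagre {f : C(Set.Icc (0 : ℝ) 1, ℝ) |
      ∃ t : Set.Icc (0 : ℝ) 1, (∃ q : ℚ, (q : ℝ) = (t : ℝ)) ∧ ∃ q : ℚ, (q : ℝ) = f t} := by
  set A : ℚ × ℚ → Set C(Set.Icc (0 : ℝ) 1, ℝ) :=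
    fun p => {f | ∃ t : Set.Icc (0 : ℝ) 1, (t : ℝ) = (p.1 : ℝ) ∧ (p.2 : ℝ) = f t} with hA
  rw [isMeagre_iff_countable_union_isNowhereDense]
  refine ⟨Set.range A, ?_, Set.countable_range A, ?_⟩
  · rintro s ⟨p, rfl⟩
    by_cases h : (p.1 : ℝ) ∈ Set.Icc (0:ℝ) 1
    · have hAe : A p = {f : C(Set.Icc (0 : ℝ) 1, ℝ) | (p.2 : ℝ) = f ⟨(p.1 : ℝ), h⟩} := by
        ext f
        constructor
        · rintro ⟨t, ht, hf⟩
          have : t = ⟨(p.1 : ℝ), h⟩ := Subtype.ext ht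
          rwa [this] at hf
        · intro hf
          exact ⟨⟨(p.1 : ℝ), h⟩, rfl, hf⟩
      rw [hAe, (aux_closed _ _).isNowhereDense_iff,
        interior_eq_empty_iff_dense_compl]
      exact aux_dense _ _
    · have : A p = ∅ := by
        ext f
        simp only [hA, mem_setOf_eq, mem_empty_iff_false, iff_false]
        rintro ⟨t, ht, -⟩
        exact h (ht ▸ t.2)
      rw [this]; exact isNowhereDense_empty
  · rintro f ⟨t, ⟨q, hq⟩, ⟨r, hr⟩⟩
    exact Set.mem_sUnion.mpr ⟨A (q, r), ⟨(q, r), rfl⟩, ⟨t, hq.symm, hr⟩⟩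
end
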